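/- arXiv:math/0412526 — 8 statements merged into one kernel-verified Lean document; each statement's English description precedes it below -/
import Mathlib

section
/- Let p, q ≥ 0 with p + q ≤ r and let a ∈ C_{p,q}. Then there exists a neighborhood U of a in Herm(r) such that for every x ∈ U one has: x ∈ C_{p,q} if and only if rank(x) ≤ p + q. (In other words, in a neighborhood of a, the set C_{p,q} is cut out inside Herm(r) by the condition that the rank be at most p + q.) -/
open Matrix Finset
open scoped InnerProductSpace

/-- `Cpq r p q` is the set of Hermitian `r × r` complex matrices having exactly `p`
positive and exactly `q` negative eigenvalues, counted with multiplicity. -/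
def Cpq (r p q : ℕ) : Set (Matrix (Fin r) (Fin r) ℂ) :=
  {x | ∃ hx : x.IsHermitian,
    (Finset.univ.filter fun i => 0 < hx.eigenvalues i).card = p ∧
    (Finset.univ.filter fun i => hx.eigenvalues i < 0).card = q}

variable {r : ℕ}

noncomputable def clmM (x : Matrix (Fin r) (Fin r) ℂ) :
    EuclideanSpace ℂ (Fin r) →L[ℂ] EuclideanSpace ℂ (Fin r) :=
  Matrix.toEuclideanCLM (𝕜 := ℂ) x

lemma clm_basis {x : Matrix (Fin r) (Fin r) ℂ} (hx : x.IsHermitian) (i : Fin r) :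
    clmM x (hx.eigenvectorBasis i) = (hx.eigenvalues i : ℂ) • hx.eigenvectorBasis i := by
  apply (WithLp.equiv 2 (Fin r → ℂ)).injective
  rw [clmM]
  change x *ᵥ (WithLp.equiv 2 (Fin r → ℂ)) (hx.eigenvectorBasis i) = _
  have h := hx.mulVec_eigenvectorBasis i
  have : (WithLp.equiv 2 (Fin r → ℂ)) (hx.eigenvectorBasis i) = ⇑(hx.eigenvectorBasis i) := rfl
  rw [this, h, RCLike.real_smul_eq_coe_smul (K := ℂ)]
  rfl

lemma continuous_clmM : Continuous (clmM (r := r)) := by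
  let L : Matrix (Fin r) (Fin r) ℂ →ₗ[ℂ] (EuclideanSpace ℂ (Fin r) →L[ℂ] EuclideanSpace ℂ (Fin r)) :=
    { toFun := clmM,
      map_add' := fun a b => map_add (Matrix.toEuclideanCLM (𝕜 := ℂ)) a b,
      map_smul' := fun c a => map_smul (Matrix.toEuclideanCLM (𝕜 := ℂ)) c a }
  exact L.continuous_of_finiteDimensional

lemma re_inner_clm {x : Matrix (Fin r) (Fin r) ℂ} (hx : x.IsHermitian)
    (v : EuclideanSpace ℂ (Fin r)) :
    RCLike.re ⟪v, clmM x v⟫_ℂ =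
      ∑ i, hx.eigenvalues i * ‖⟪hx.eigenvectorBasis i, v⟫_ℂ‖ ^ 2 := by
  set b := hx.eigenvectorBasis with hb
  have hv : clmM x v = ∑ i, (⟪b i, v⟫_ℂ * (hx.eigenvalues i : ℂ)) • b i := by
    conv_lhs => rw [← b.sum_repr' v]
    rw [map_sum]
    simp_rw [ContinuousLinearMap.map_smul, hb, clm_basis hx, smul_smul]
  have key : ∀ i, ⟪v, (⟪b i, v⟫_ℂ * (hx.eigenvalues i : ℂ)) • b i⟫_ℂ
      = ((hx.eigenvalues i * ‖⟪b i, v⟫_ℂ‖ ^ 2 : ℝ) : ℂ) := by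
    intro i
    rw [inner_smul_right, ← inner_conj_symm v (b i)]
    rw [show ⟪b i, v⟫_ℂ * (hx.eigenvalues i : ℂ) * (starRingEnd ℂ) ⟪b i, v⟫_ℂ
        = (hx.eigenvalues i : ℂ) * (⟪b i, v⟫_ℂ * (starRingEnd ℂ) ⟪b i, v⟫_ℂ) from by ring,
      RCLike.mul_conj]
    push_cast
    rfl
  rw [hv, inner_sum, Finset.sum_congr rfl fun i _ => key i, ← Complex.ofReal_sum]
  exact RCLike.ofReal_re _

lemma sum_norm_sq_inner (b : OrthonormalBasis (Fin r) ℂ (EuclideanSpace ℂ (Fin r)))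
    (v : EuclideanSpace ℂ (Fin r)) :
    ∑ i, ‖⟪b i, v⟫_ℂ‖ ^ 2 = ‖v‖ ^ 2 := by
  have h := b.sum_inner_mul_inner v v
  have h2 : ∀ i, ⟪v, b i⟫_ℂ * ⟪b i, v⟫_ℂ = ((‖⟪b i, v⟫_ℂ‖ ^ 2 : ℝ) : ℂ) := by
    intro i
    rw [← inner_conj_symm v (b i), RCLike.conj_mul]
    norm_cast
  simp_rw [h2] at h
  rw [← Complex.ofReal_sum, inner_self_eq_norm_sq_to_K] at h
  apply Complex.ofReal_injective
  rw [h]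
  norm_cast

lemma inner_basis_eq_zero_of_mem_span {b : OrthonormalBasis (Fin r) ℂ (EuclideanSpace ℂ (Fin r))}
    {P : Finset (Fin r)} {j : Fin r} (hj : j ∉ P) {v : EuclideanSpace ℂ (Fin r)}
    (hv : v ∈ Submodule.span ℂ (b '' ↑P)) :
    ⟪b j, v⟫_ℂ = 0 := by
  have hker : Submodule.span ℂ (b '' ↑P) ≤ LinearMap.ker (innerSL ℂ (b j) : EuclideanSpace ℂ (Fin r) →ₗ[ℂ] ℂ) := by
    rw [Submodule.span_le]
    rintro u ⟨i, hi, rfl⟩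
    have hne : j ≠ i := fun h => hj (h ▸ hi)
    simpa using b.orthonormal.2 hne
  simpa using hker hv

lemma finrank_span_basis (b : OrthonormalBasis (Fin r) ℂ (EuclideanSpace ℂ (Fin r)))
    (P : Finset (Fin r)) :
    Module.finrank ℂ (Submodule.span ℂ (b '' ↑P)) = P.card := by
  have li : LinearIndependent ℂ (fun i : (P : Set (Fin r)) => b i) :=
    b.orthonormal.linearIndependent.comp _ Subtype.val_injective
  have h := finrank_span_eq_card li
  rw [← Set.image_eq_range] at h
  simpa using h

lemma count_aux {x : Matrix (Fin r) (Fin r) ℂ} (hx : x.IsHermitian) (s : ℝ) (P : Finset (Fin r))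
    (hP : ∀ i, i ∉ P → s * hx.eigenvalues i ≤ 0)
    (W : Submodule ℂ (EuclideanSpace ℂ (Fin r)))
    (hW : ∀ v ∈ W, v ≠ 0 → 0 < s * RCLike.re ⟪v, clmM x v⟫_ℂ) :
    Module.finrank ℂ W ≤ P.card := by
  by_contra hc
  push_neg at hc
  set b := hx.eigenvectorBasis with hb
  set S := Submodule.span ℂ (b '' ↑P) with hS
  have hdimS : Module.finrank ℂ S = P.card := finrank_span_basis b P
  have hES : Module.finrank ℂ (EuclideanSpace ℂ (Fin r)) = r := by
    simp [finrank_euclideanSpace]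
  have horth := Submodule.finrank_add_finrank_orthogonal S
  have hsum := Submodule.finrank_sup_add_finrank_inf_eq W Sᗮ
  have hle : Module.finrank ℂ ((W ⊔ Sᗮ) : Submodule ℂ _) ≤ r :=
    le_trans (Submodule.finrank_le _) (le_of_eq hES)
  have hpos : 0 < Module.finrank ℂ ((W ⊓ Sᗮ) : Submodule ℂ _) := by omega
  obtain ⟨v, hvmem, hvne⟩ : ∃ v, v ∈ W ⊓ Sᗮ ∧ v ≠ 0 := by
    apply Submodule.exists_mem_ne_zero_of_ne_bot
    intro h
    rw [h] at hpos
    simp at hpos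
  have h1 := hW v hvmem.1 hvne
  have h2 : s * RCLike.re ⟪v, clmM x v⟫_ℂ ≤ 0 := by
    rw [re_inner_clm hx v, Finset.mul_sum]
    apply Finset.sum_nonpos
    intro i _
    by_cases hi : i ∈ P
    · have hz : ⟪b i, v⟫_ℂ = 0 :=
        (Submodule.mem_orthogonal S v).1 hvmem.2 (b i)
          (Submodule.subset_span ⟨i, by simpa using hi, rfl⟩)
      simp [hz, show ⟪hx.eigenvectorBasis i, v⟫_ℂ = 0 from hz]
    · have := hP i hi
      nlinarith [sq_nonneg ‖⟪b i, v⟫_ℂ‖]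
  linarith

lemma span_bound {x : Matrix (Fin r) (Fin r) ℂ} (hx : x.IsHermitian) (s c : ℝ)
    (P : Finset (Fin r)) (hP : ∀ i ∈ P, c ≤ s * hx.eigenvalues i)
    {v : EuclideanSpace ℂ (Fin r)}
    (hv : v ∈ Submodule.span ℂ (hx.eigenvectorBasis '' ↑P)) :
    c * ‖v‖ ^ 2 ≤ s * RCLike.re ⟪v, clmM x v⟫_ℂ := by
  set b := hx.eigenvectorBasis with hb
  rw [re_inner_clm hx v, Finset.mul_sum, ← sum_norm_sq_inner b v, Finset.mul_sum]
  apply Finset.sum_le_sum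
  intro i _
  by_cases hi : i ∈ P
  · have h := hP i hi
    nlinarith [sq_nonneg ‖⟪b i, v⟫_ℂ‖]
  · have hz : ⟪b i, v⟫_ℂ = 0 := inner_basis_eq_zero_of_mem_span hi hv
    simp [hz, show ⟪hx.eigenvectorBasis i, v⟫_ℂ = 0 from hz]
/-- Near any of its points `a`, the set `C_{p,q}` is cut out inside the Hermitian matrices by
the condition that the rank be at most `p + q`: there is a neighbourhood `U` of `a` such that
a Hermitian matrix `x ∈ U` lies in `C_{p,q}` if and only if `rank x ≤ p + q`. -/
theorem Cpq_locally_rank_le {r : ℕ} (hr : 1 ≤ r) (p q : ℕ) (hpq : p + q ≤ r)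
    (a : Matrix (Fin r) (Fin r) ℂ) (ha : a ∈ Cpq r p q) :
    ∃ U ∈ nhds a, ∀ x ∈ U, ∀ _ : Matrix.IsHermitian x,
      (x ∈ Cpq r p q ↔ x.rank ≤ p + q) := by
  obtain ⟨hA, hp, hq⟩ := ha
  set b := hA.eigenvectorBasis with hb
  set Pa : Finset (Fin r) := Finset.univ.filter (fun i => 0 < hA.eigenvalues i) with hPa
  set Qa : Finset (Fin r) := Finset.univ.filter (fun i => hA.eigenvalues i < 0) with hQa
  have htne : (insert (1:ℝ) ((Pa ∪ Qa).image fun i => |hA.eigenvalues i|)).Nonempty :=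
    ⟨1, Finset.mem_insert_self _ _⟩
  set ε : ℝ := (insert (1:ℝ) ((Pa ∪ Qa).image fun i => |hA.eigenvalues i|)).min' htne with hε
  have hεpos : 0 < ε := by
    have hmem := Finset.min'_mem _ htne
    rw [← hε] at hmem
    rcases Finset.mem_insert.1 hmem with h | h
    · rw [h]; norm_num
    · obtain ⟨i, hi, hie⟩ := Finset.mem_image.1 h
      rw [← hie]
      rcases Finset.mem_union.1 hi with h' | h'
      · have := (Finset.mem_filter.1 h').2
        exact abs_pos.2 (ne_of_gt this)
      · have := (Finset.mem_filter.1 h').2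
        exact abs_pos.2 (ne_of_lt this)
  have hεP : ∀ i ∈ Pa, ε ≤ hA.eigenvalues i := by
    intro i hi
    have h1 : ε ≤ |hA.eigenvalues i| :=
      Finset.min'_le _ _ (Finset.mem_insert_of_mem
        (Finset.mem_image_of_mem _ (Finset.mem_union_left _ hi)))
    rwa [abs_of_pos (Finset.mem_filter.1 hi).2] at h1
  have hεQ : ∀ i ∈ Qa, ε ≤ -hA.eigenvalues i := by
    intro i hi
    have h1 : ε ≤ |hA.eigenvalues i| :=
      Finset.min'_le _ _ (Finset.mem_insert_of_mem
        (Finset.mem_image_of_mem _ (Finset.mem_union_right _ hi)))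
    rwa [abs_of_neg (Finset.mem_filter.1 hi).2] at h1
  refine ⟨clmM ⁻¹' Metric.ball (clmM a) ε, ?_, ?_⟩
  · exact (Metric.isOpen_ball.preimage continuous_clmM).mem_nhds
      (by simp [Metric.mem_ball, hεpos])
  intro x hxU hx
  have hxa : ‖clmM x - clmM a‖ < ε := by
    have := Metric.mem_ball.1 hxU
    rwa [dist_eq_norm] at this
  have hpert : ∀ v : EuclideanSpace ℂ (Fin r),
      |RCLike.re ⟪v, clmM x v⟫_ℂ - RCLike.re ⟪v, clmM a v⟫_ℂ|
        ≤ ‖clmM x - clmM a‖ * ‖v‖ ^ 2 := by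
    intro v
    have h1 : RCLike.re ⟪v, clmM x v⟫_ℂ - RCLike.re ⟪v, clmM a v⟫_ℂ
        = RCLike.re ⟪v, (clmM x - clmM a) v⟫_ℂ := by
      rw [ContinuousLinearMap.sub_apply, inner_sub_right, map_sub]
    rw [h1]
    calc |RCLike.re ⟪v, (clmM x - clmM a) v⟫_ℂ| ≤ ‖⟪v, (clmM x - clmM a) v⟫_ℂ‖ :=
          RCLike.abs_re_le_norm _
      _ ≤ ‖v‖ * ‖(clmM x - clmM a) v‖ := norm_inner_le_norm _ _
      _ ≤ ‖v‖ * (‖clmM x - clmM a‖ * ‖v‖) := by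
          gcongr
          exact (clmM x - clmM a).le_opNorm v
      _ = ‖clmM x - clmM a‖ * ‖v‖ ^ 2 := by ring
  have hcountP : p ≤ (Finset.univ.filter fun i => 0 < hx.eigenvalues i).card := by
    have hfr : Module.finrank ℂ (Submodule.span ℂ (b '' ↑Pa)) = p := by
      rw [finrank_span_basis]; exact hp
    rw [← hfr]
    refine count_aux hx 1 _ (fun i hi => ?_) _ (fun v hv hvne => ?_)
    · simp only [Finset.mem_filter, Finset.mem_univ, true_and, not_lt] at hi
      linarith
    · have hlow := span_bound hA 1 ε Pa (fun i hi => by simpa using hεP i hi) hv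
      have hp2 := abs_le.1 (hpert v)
      have hnv : 0 < ‖v‖ ^ 2 := pow_pos (norm_pos_iff.2 hvne) 2
      rw [one_mul] at hlow ⊢
      nlinarith [mul_pos (sub_pos.2 hxa) hnv]
  have hcountQ : q ≤ (Finset.univ.filter fun i => hx.eigenvalues i < 0).card := by
    have hfr : Module.finrank ℂ (Submodule.span ℂ (b '' ↑Qa)) = q := by
      rw [finrank_span_basis]; exact hq
    rw [← hfr]
    refine count_aux hx (-1) _ (fun i hi => ?_) _ (fun v hv hvne => ?_)
    · simp only [Finset.mem_filter, Finset.mem_univ, true_and, not_lt] at hi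
      nlinarith
    · have hlow := span_bound hA (-1) ε Qa (fun i hi => by
        have := hεQ i hi; linarith) hv
      have hp2 := abs_le.1 (hpert v)
      have hnv : 0 < ‖v‖ ^ 2 := pow_pos (norm_pos_iff.2 hvne) 2
      nlinarith [mul_pos (sub_pos.2 hxa) hnv]
  have hrank : x.rank = (Finset.univ.filter fun i => 0 < hx.eigenvalues i).card
      + (Finset.univ.filter fun i => hx.eigenvalues i < 0).card := by
    have hsplit : (Finset.univ.filter fun i => hx.eigenvalues i ≠ 0)
        = (Finset.univ.filter fun i => 0 < hx.eigenvalues i)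
          ∪ (Finset.univ.filter fun i => hx.eigenvalues i < 0) := by
      ext i
      simp only [Finset.mem_filter, Finset.mem_univ, true_and, Finset.mem_union, ne_eq]
      constructor
      · intro h
        rcases lt_or_gt_of_ne h with h' | h'
        · exact Or.inr h'
        · exact Or.inl h'
      · rintro (h | h)
        · exact ne_of_gt h
        · exact ne_of_lt h
    have hdisj : Disjoint (Finset.univ.filter fun i => 0 < hx.eigenvalues i)
        (Finset.univ.filter fun i => hx.eigenvalues i < 0) := by
      rw [Finset.disjoint_left]
      intro i hi1 hi2
      simp only [Finset.mem_filter, Finset.mem_univ, true_and] at hi1 hi2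
      linarith
    rw [hx.rank_eq_card_non_zero_eigs, Fintype.card_subtype, hsplit,
      Finset.card_union_of_disjoint hdisj]
  constructor
  · rintro ⟨hx', h1, h2⟩
    obtain rfl := Subsingleton.elim hx' hx
    omega
  · intro hrle
    refine ⟨hx, ?_, ?_⟩ <;> omega
end

section
/- Let a be a Hermitian r×r complex matrix such that λ + μ ≠ 0 for any two nonzero eigenvalues λ, μ of a (equivalently, no nonzero eigenvalue of a has its negative also an eigenvalue). Then {a v + v a : v ∈ Herm(r)} = {w ∈ Herm(r) : ⟨x, w y⟩ = 0 for all x, y ∈ ℂ^r with a x = 0 and a y = 0}, where ⟨·,·⟩ denotes the standard Hermitian inner product on ℂ^r. -/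
open Matrix

/-- Let `a` be a Hermitian `r × r` complex matrix such that `λ + μ ≠ 0` for any two nonzero
eigenvalues `λ, μ` of `a`. Then the set `{a v + v a : v Hermitian}` equals the set of Hermitian
matrices `w` with `⟨x, w y⟩ = 0` for all `x, y ∈ ℂʳ` in the kernel of `a`. -/
theorem range_jordan_mul_eq {r : ℕ} (hr : 1 ≤ r)
    (a : Matrix (Fin r) (Fin r) ℂ) (ha : a.IsHermitian)
    (hnr : ∀ i j : Fin r, ha.eigenvalues i ≠ 0 → ha.eigenvalues j ≠ 0 →
      ha.eigenvalues i + ha.eigenvalues j ≠ 0) :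
    {w : Matrix (Fin r) (Fin r) ℂ |
        ∃ v : Matrix (Fin r) (Fin r) ℂ, v.IsHermitian ∧ w = a * v + v * a} =
      {w : Matrix (Fin r) (Fin r) ℂ | w.IsHermitian ∧
        ∀ x y : Fin r → ℂ, a.mulVec x = 0 → a.mulVec y = 0 → star x ⬝ᵥ w.mulVec y = 0} := by
  set U : Matrix (Fin r) (Fin r) ℂ := (ha.eigenvectorUnitary : Matrix (Fin r) (Fin r) ℂ) with hUdef
  have hU1 : star U * U = 1 := Matrix.mem_unitaryGroup_iff'.mp ha.eigenvectorUnitary.2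
  have hU2 : U * star U = 1 := Matrix.mem_unitaryGroup_iff.mp ha.eigenvectorUnitary.2
  set d : Fin r → ℂ := fun i => (ha.eigenvalues i : ℂ) with hddef
  set D : Matrix (Fin r) (Fin r) ℂ := diagonal d with hDdef
  have hspec : a = U * D * star U := ha.spectral_theorem
  -- sums of eigenvalues vanish only when both do
  have hsum : ∀ i j : Fin r, d i + d j = 0 → d i = 0 ∧ d j = 0 := by
    intro i j h
    have h' : ha.eigenvalues i + ha.eigenvalues j = 0 := by
      have := congrArg Complex.re h
      simpa [hddef] using this
    rcases eq_or_ne (ha.eigenvalues i) 0 with hi | hi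
    · have hj : ha.eigenvalues j = 0 := by linarith [h']
      simp [hddef, hi, hj]
    · rcases eq_or_ne (ha.eigenvalues j) 0 with hj | hj
      · exfalso; apply hi; linarith [h']
      · exact absurd h' (hnr i j hi hj)
  ext w
  simp only [Set.mem_setOf_eq]
  constructor
  · rintro ⟨v, hv, rfl⟩
    refine ⟨?_, ?_⟩
    · unfold Matrix.IsHermitian
      rw [conjTranspose_add, conjTranspose_mul, conjTranspose_mul, ha.eq, hv.eq, add_comm]
    · intro x y hx hy
      have h1 : star x ᵥ* a = 0 := by
        have : star (a *ᵥ x) = star x ᵥ* aᴴ := star_mulVec a x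
        rw [ha.eq] at this
        rw [← this, hx, star_zero]
      rw [add_mulVec, dotProduct_add, ← mulVec_mulVec, ← mulVec_mulVec,
        dotProduct_mulVec (star x) a, h1, hy, mulVec_zero, dotProduct_zero,
        zero_dotProduct, add_zero]
  · rintro ⟨hw, hker⟩
    -- conjugated matrix
    set w' : Matrix (Fin r) (Fin r) ℂ := star U * w * U with hw'def
    have hw'herm : w'ᴴ = w' := by
      simp [hw'def, conjTranspose_mul, hw.eq, star_eq_conjTranspose, mul_assoc]
    -- kernel entries of w' vanish
    have hker' : ∀ i j : Fin r, d i = 0 → d j = 0 → w' i j = 0 := by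
      intro i j hi hj
      have hcol : ∀ k : Fin r, d k = 0 → a *ᵥ (U *ᵥ Pi.single k 1) = 0 := by
        intro k hk
        have h3 : U * D * star U * U = U * D := by rw [mul_assoc, hU1, mul_one]
        rw [mulVec_mulVec, hspec, h3, ← mulVec_mulVec, hDdef, diagonal_mulVec_single]
        have : (Pi.single k (d k * 1) : Fin r → ℂ) = 0 := by simp [hk]
        rw [this, mulVec_zero]
      have key := hker (U *ᵥ Pi.single i 1) (U *ᵥ Pi.single j 1) (hcol i hi) (hcol j hj)
      have : star (U *ᵥ Pi.single i 1) ⬝ᵥ w *ᵥ (U *ᵥ Pi.single j 1) = w' i j := by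
        simp only [hw'def, mulVec_single, mul_one, mul_apply, dotProduct, mulVec,
          star_eq_conjTranspose, conjTranspose_apply, Pi.star_apply, Finset.sum_mul,
          Finset.mul_sum]
        rw [Finset.sum_comm]
        refine Finset.sum_congr rfl fun k _ => Finset.sum_congr rfl fun l _ => ?_
        simp [Pi.single_apply, mul_ite, mul_one, mul_zero, mul_assoc]
      rw [this] at key
      exact key
    -- build preimage in eigenbasis
    set v' : Matrix (Fin r) (Fin r) ℂ := fun i j => w' i j / (d i + d j) with hv'def
    have hkey : D * v' + v' * D = w' := by
      ext i j
      have : (D * v' + v' * D) i j = (d i + d j) * v' i j := by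
        simp only [hDdef, Matrix.add_apply, diagonal_mul, mul_diagonal]
        ring
      rw [this]
      rcases eq_or_ne (d i + d j) 0 with h0 | h0
      · obtain ⟨hi, hj⟩ := hsum i j h0
        simp [hv'def, hker' i j hi hj]
      · simp [hv'def]
        field_simp
    have hv'herm : v'ᴴ = v' := by
      ext i j
      have hd : ∀ k, (starRingEnd ℂ) (d k) = d k := by
        intro k; simp [hddef, Complex.conj_ofReal]
      have hwc : (starRingEnd ℂ) (w' j i) = w' i j := by
        conv_rhs => rw [← hw'herm]
        simp [conjTranspose_apply]
      rw [conjTranspose_apply]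
      simp [conjTranspose_apply, hv'def, map_div₀, hwc, hd, add_comm]
    refine ⟨U * v' * star U, ?_, ?_⟩
    · show (U * v' * star U)ᴴ = U * v' * star U
      simp [conjTranspose_mul, hv'herm, star_eq_conjTranspose, mul_assoc]
    · have : a * (U * v' * star U) + (U * v' * star U) * a
          = U * (D * v' + v' * D) * star U := by
        rw [hspec]
        have e1 : U * D * star U * (U * v' * star U) = U * (D * v') * star U := by
          simp only [mul_assoc]
          rw [← mul_assoc (star U) U, hU1, one_mul]
        have e2 : U * v' * star U * (U * D * star U) = U * (v' * D) * star U := by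
          simp only [mul_assoc]
          rw [← mul_assoc (star U) U, hU1, one_mul]
        rw [e1, e2, mul_add, add_mul]
      rw [this, hkey, hw'def]
      simp only [mul_assoc]
      rw [← mul_assoc U (star U), hU2, one_mul, mul_one]
end

section
/- Let a and v be Hermitian r×r complex matrices. Then a v z + z v a = 0 for every Hermitian r×r matrix z if and only if a v = 0. -/
open Matrix

/-- For Hermitian `r × r` complex matrices `a` and `v`, one has `a v z + z v a = 0` for every
Hermitian matrix `z` if and only if `a v = 0`.  (Matrix form of: the Jordan triple products
`{a v z}` vanish for all `z` exactly when `v` lies in the Peirce `0`-space of `a`.) -/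
theorem triple_vanish_iff_peirce_zero {r : ℕ} (hr : 1 ≤ r)
    (a v : Matrix (Fin r) (Fin r) ℂ) (ha : a.IsHermitian) (hv : v.IsHermitian) :
    (∀ z : Matrix (Fin r) (Fin r) ℂ, z.IsHermitian → a * v * z + z * v * a = 0) ↔ a * v = 0 := by
  have hbH : (a * v)ᴴ = v * a := by
    rw [conjTranspose_mul, ha.eq, hv.eq]
  constructor
  · intro h
    -- from z = 1 : a*v + (a*v)ᴴ = 0
    have h1 : a * v + (a * v)ᴴ = 0 := by
      have := h 1 isHermitian_one
      rwa [mul_one, one_mul, ← hbH] at this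
    have hneg : (a * v)ᴴ = -(a * v) := eq_neg_of_add_eq_zero_right h1
    -- a*v commutes with every Hermitian matrix
    have hcomm : ∀ z : Matrix (Fin r) (Fin r) ℂ, z.IsHermitian → (a * v) * z = z * (a * v) := by
      intro z hz
      have h0 := h z hz
      rw [mul_assoc z v a, ← hbH, hneg, mul_neg] at h0
      exact sub_eq_zero.mp (by simpa [sub_eq_add_neg] using h0)
    -- hence with every matrix
    have hall : ∀ m : Matrix (Fin r) (Fin r) ℂ, (a * v) * m = m * (a * v) := by
      intro m
      have hz1 : (m + mᴴ).IsHermitian := by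
        ext i j
        simp [Matrix.conjTranspose_apply, Matrix.add_apply, add_comm]
      have hz2 : (Complex.I • (m - mᴴ)).IsHermitian := by
        ext i j
        simp [Matrix.conjTranspose_apply, Matrix.smul_apply, Matrix.sub_apply,
          smul_eq_mul, Complex.conj_I]
        ring
      have e1 := hcomm _ hz1
      have e2 := hcomm _ hz2
      have e2' : (a * v) * (m - mᴴ) = (m - mᴴ) * (a * v) := by
        rw [mul_smul_comm, smul_mul_assoc] at e2
        exact smul_right_injective _ Complex.I_ne_zero e2
      have key : (2 : ℂ) • ((a * v) * m) = (2 : ℂ) • (m * (a * v)) := by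
        have h12 : (a * v) * ((m + mᴴ) + (m - mᴴ)) = ((m + mᴴ) + (m - mᴴ)) * (a * v) := by
          rw [mul_add, add_mul, e1, e2']
        rw [show (m + mᴴ) + (m - mᴴ) = m + m by abel, mul_add, add_mul] at h12
        rw [two_smul, two_smul]
        exact h12
      exact smul_right_injective _ (two_ne_zero) key
    -- hence a*v is scalar
    obtain ⟨c, hc⟩ : a * v ∈ Set.range (Matrix.scalar (Fin r)) :=
      mem_range_scalar_of_commute_single fun i j _ => (hall _).symm
    -- trace of a*v is real
    have htr_real : star (a * v).trace = (a * v).trace := by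
      rw [← trace_conjTranspose, hbH, trace_mul_comm]
    -- trace of a*v is zero
    have htr0 : (a * v).trace = 0 := by
      have h2 : (a * v).trace + ((a * v)ᴴ).trace = 0 := by
        rw [← trace_add, h1, trace_zero]
      rw [trace_conjTranspose, htr_real] at h2
      linear_combination h2 / 2
    -- trace of scalar matrix
    have htrc : (a * v).trace = (r : ℂ) * c := by
      rw [← hc]
      simp [Matrix.scalar_apply, trace_diagonal, Finset.sum_const]
    have hc0 : c = 0 := by
      rw [htr0] at htrc
      have hrne : (r : ℂ) ≠ 0 := Nat.cast_ne_zero.mpr (by omega)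
      exact (mul_eq_zero.mp htrc.symm).resolve_left hrne
    rw [← hc, hc0]
    simp
  · intro h z hz
    have hva : v * a = 0 := by rw [← hbH, h]; simp
    rw [h, mul_assoc, hva]
    simp
end

section
/- For integers p, q ≥ 0 with p + q ≤ r, the set C_{p,q} is a convex subset of Herm(r) if and only if (p, q) is one of (r, 0), (0, r), or (0, 0). -/
open Matrix

namespace CpqAux

open Polynomial Finset
open scoped ComplexOrder

variable {r : ℕ}

lemma charpoly_conj (U M V : Matrix (Fin r) (Fin r) ℂ) (h : U * V = 1) :
    (U * M * V).charpoly = M.charpoly := by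
  have h1 : (C : ℂ →+* ℂ[X]).mapMatrix U * (C : ℂ →+* ℂ[X]).mapMatrix V = 1 := by
    rw [← _root_.map_mul, h, _root_.map_one]
  have hcomm : ∀ A : Matrix (Fin r) (Fin r) ℂ[X],
      Matrix.scalar (Fin r) (X : ℂ[X]) * A = A * Matrix.scalar (Fin r) (X : ℂ[X]) :=
    fun A => (Matrix.scalar_commute _ (fun r' => Commute.all _ _) A).eq
  have hm : charmatrix (U * M * V) =
      (C : ℂ →+* ℂ[X]).mapMatrix U * charmatrix M * (C : ℂ →+* ℂ[X]).mapMatrix V := by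
    unfold charmatrix
    rw [mul_sub, sub_mul, ← _root_.map_mul, ← _root_.map_mul]
    congr 1
    rw [← hcomm, mul_assoc, h1, mul_one]
  have h2 : ((C : ℂ →+* ℂ[X]).mapMatrix U).det * ((C : ℂ →+* ℂ[X]).mapMatrix V).det = 1 := by
    rw [← det_mul, h1, det_one]
  rw [Matrix.charpoly, Matrix.charpoly, hm, det_mul, det_mul]
  linear_combination M.charmatrix.det * h2

lemma charpoly_diagonal (c : Fin r → ℂ) :
    (diagonal c).charpoly = ∏ i, (X - C (c i)) := by
  have hm : charmatrix (diagonal c) = diagonal (fun i => (X : ℂ[X]) - C (c i)) := by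
    ext i j
    by_cases hij : i = j
    · subst hij; simp [charmatrix_apply_eq]
    · simp [charmatrix_apply_ne _ _ _ hij, diagonal_apply_ne _ hij]
  rw [Matrix.charpoly, hm, det_diagonal]

lemma roots_charpoly_diagonal (c : Fin r → ℂ) :
    (diagonal c).charpoly.roots = Finset.univ.val.map c := by
  rw [charpoly_diagonal]
  have : ∏ i, ((X : ℂ[X]) - C (c i)) = ((Finset.univ.val.map c).map fun a => X - C a).prod := by
    rw [Multiset.map_map]; rfl
  rw [this, roots_multiset_prod_X_sub_C]

lemma roots_charpoly_of_isHermitian {x : Matrix (Fin r) (Fin r) ℂ} (hx : x.IsHermitian) :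
    x.charpoly.roots = Finset.univ.val.map (fun i => (hx.eigenvalues i : ℂ)) := by
  conv_lhs => rw [hx.spectral_theorem, Unitary.conjStarAlgAut_apply]
  rw [charpoly_conj _ _ _ (Matrix.mem_unitaryGroup_iff.mp hx.eigenvectorUnitary.2)]
  exact roots_charpoly_diagonal _


lemma countP_map_eq (f : Fin r → ℝ) (P : ℝ → Prop) [DecidablePred P]
    (Q : ℂ → Prop) [DecidablePred Q] (h : ∀ a : ℝ, Q a ↔ P a) :
    (Finset.univ.val.map (fun i => (f i : ℂ))).countP Q
      = (Finset.univ.filter fun i => P (f i)).card := by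
  rw [Multiset.countP_map]
  show Multiset.card _ = Multiset.card _
  congr 1
  exact Multiset.filter_congr (fun i _ => h (f i))

lemma card_filter_lt (k : ℕ) (hk : k ≤ r) :
    (Finset.univ.filter fun i : Fin r => (i : ℕ) < k).card = k := by
  have h : ∀ m ∈ Finset.range k, m < r := fun m hm =>
    lt_of_lt_of_le (Finset.mem_range.mp hm) hk
  have : (Finset.univ.filter fun i : Fin r => (i : ℕ) < k)
      = (Finset.range k).attachFin h := by
    ext i; simp [Finset.mem_attachFin]
  rw [this, Finset.card_attachFin, Finset.card_range]

lemma card_filter_Ico (a b : ℕ) (hb : b ≤ r) :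
    (Finset.univ.filter fun i : Fin r => a ≤ (i : ℕ) ∧ (i : ℕ) < b).card = b - a := by
  have h : ∀ m ∈ Finset.Ico a b, m < r := fun m hm =>
    lt_of_lt_of_le (Finset.mem_Ico.mp hm).2 hb
  have : (Finset.univ.filter fun i : Fin r => a ≤ (i : ℕ) ∧ (i : ℕ) < b)
      = (Finset.Ico a b).attachFin h := by
    ext i; simp [Finset.mem_attachFin, Finset.mem_Ico]
  rw [this, Finset.card_attachFin, Nat.card_Ico]


noncomputable def posC (x : Matrix (Fin r) (Fin r) ℂ) : ℕ :=
  x.charpoly.roots.countP (fun z => 0 < z.re)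

noncomputable def negC (x : Matrix (Fin r) (Fin r) ℂ) : ℕ :=
  x.charpoly.roots.countP (fun z => z.re < 0)


lemma posC_eq {x : Matrix (Fin r) (Fin r) ℂ} (hx : x.IsHermitian) :
    posC x = (Finset.univ.filter fun i => 0 < hx.eigenvalues i).card := by
  rw [posC, roots_charpoly_of_isHermitian hx]
  exact countP_map_eq _ _ _ (fun a => by simp)

lemma negC_eq {x : Matrix (Fin r) (Fin r) ℂ} (hx : x.IsHermitian) :
    negC x = (Finset.univ.filter fun i => hx.eigenvalues i < 0).card := by
  rw [negC, roots_charpoly_of_isHermitian hx]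
  exact countP_map_eq _ (fun a => a < 0) (fun z => z.re < 0) (fun a => by simp)

lemma mem_Cpq_iff {p q : ℕ} {x : Matrix (Fin r) (Fin r) ℂ} :
    x ∈ Cpq r p q ↔ x.IsHermitian ∧ posC x = p ∧ negC x = q := by
  constructor
  · rintro ⟨hx, h1, h2⟩
    exact ⟨hx, by rw [posC_eq hx]; exact h1, by rw [negC_eq hx]; exact h2⟩
  · rintro ⟨hx, h1, h2⟩
    exact ⟨hx, by rw [← posC_eq hx]; exact h1, by rw [← negC_eq hx]; exact h2⟩

noncomputable def Dg (d : Fin r → ℝ) : Matrix (Fin r) (Fin r) ℂ :=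
  diagonal (fun i => (d i : ℂ))

lemma Dg_isHermitian (d : Fin r → ℝ) : (Dg d).IsHermitian :=
  isHermitian_diagonal_of_self_adjoint _ (funext fun i => Complex.conj_ofReal _)

lemma posC_Dg (d : Fin r → ℝ) :
    posC (Dg d) = (Finset.univ.filter fun i => 0 < d i).card := by
  rw [posC, Dg, roots_charpoly_diagonal]
  exact countP_map_eq _ _ _ (fun a => by simp)

lemma negC_Dg (d : Fin r → ℝ) :
    negC (Dg d) = (Finset.univ.filter fun i => d i < 0).card := by
  rw [negC, Dg, roots_charpoly_diagonal]
  exact countP_map_eq _ (fun a => a < 0) (fun z => z.re < 0) (fun a => by simp)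

lemma Dg_mem_iff {p q : ℕ} (d : Fin r → ℝ) :
    Dg d ∈ Cpq r p q ↔ (Finset.univ.filter fun i => 0 < d i).card = p ∧
      (Finset.univ.filter fun i => d i < 0).card = q := by
  rw [mem_Cpq_iff, posC_Dg, negC_Dg]
  exact ⟨fun h => h.2, fun h => ⟨Dg_isHermitian d, h⟩⟩

lemma posC_neg {x : Matrix (Fin r) (Fin r) ℂ} (hx : x.IsHermitian) :
    posC (-x) = negC x := by
  have hspec : -x = (hx.eigenvectorUnitary : Matrix (Fin r) (Fin r) ℂ)
      * diagonal (fun i => (-(hx.eigenvalues i) : ℂ))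
      * (star hx.eigenvectorUnitary : Matrix (Fin r) (Fin r) ℂ) := by
    conv_lhs => rw [hx.spectral_theorem, Unitary.conjStarAlgAut_apply]
    have : diagonal (fun i => (-(hx.eigenvalues i) : ℂ))
        = -diagonal (RCLike.ofReal ∘ hx.eigenvalues) := by
      rw [← diagonal_neg]; rfl
    rw [this, mul_neg, neg_mul]
  rw [posC, hspec,
    charpoly_conj _ _ _ (Matrix.mem_unitaryGroup_iff.mp hx.eigenvectorUnitary.2),
    roots_charpoly_diagonal, negC, roots_charpoly_of_isHermitian hx]
  rw [show (fun i => (-(hx.eigenvalues i) : ℂ)) = fun i => ((-(hx.eigenvalues i) : ℝ) : ℂ) by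
    funext i; push_cast; ring]
  rw [countP_map_eq (fun i => -(hx.eigenvalues i)) (fun a => 0 < a)
      (fun z => 0 < z.re) (fun a => by simp),
    countP_map_eq hx.eigenvalues (fun a => a < 0) (fun z => z.re < 0) (fun a => by simp)]
  simp [neg_pos]


lemma negC_neg {x : Matrix (Fin r) (Fin r) ℂ} (hx : x.IsHermitian) :
    negC (-x) = posC x := by
  have := posC_neg hx.neg
  rw [neg_neg] at this
  exact this.symm

lemma mem_Cpq_neg_iff {p q : ℕ} {x : Matrix (Fin r) (Fin r) ℂ} :
    x ∈ Cpq r p q ↔ -x ∈ Cpq r q p := by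
  rw [mem_Cpq_iff, mem_Cpq_iff]
  constructor
  · rintro ⟨hx, h1, h2⟩
    exact ⟨hx.neg, by rw [posC_neg hx]; exact h2, by rw [negC_neg hx]; exact h1⟩
  · rintro ⟨hx, h1, h2⟩
    have hx' : x.IsHermitian := by simpa using hx.neg
    refine ⟨hx', ?_, ?_⟩
    · rw [← negC_neg hx']; exact h2
    · rw [← posC_neg hx']; exact h1

lemma posDef_of_eigenvalues_pos {x : Matrix (Fin r) (Fin r) ℂ} (hx : x.IsHermitian)
    (h : ∀ i, 0 < hx.eigenvalues i) : x.PosDef := by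
  exact hx.posDef_iff_eigenvalues_pos.mpr h

lemma cpq_r_zero_eq : Cpq r r 0 = {x : Matrix (Fin r) (Fin r) ℂ | x.PosDef} := by
  ext x
  rw [mem_Cpq_iff]
  constructor
  · rintro ⟨hx, h1, _⟩
    refine Set.mem_setOf.mpr (posDef_of_eigenvalues_pos hx fun i => ?_)
    rw [posC_eq hx] at h1
    have huniv : (Finset.univ.filter fun i => 0 < hx.eigenvalues i) = Finset.univ :=
      Finset.eq_univ_of_card _ (by rw [h1, Fintype.card_fin])
    have : i ∈ (Finset.univ.filter fun i => 0 < hx.eigenvalues i) := by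
      rw [huniv]; exact Finset.mem_univ i
    exact (Finset.mem_filter.mp this).2
  · intro hpd
    have hx := hpd.isHermitian
    refine ⟨hx, ?_, ?_⟩
    · rw [posC_eq hx]
      rw [Finset.filter_true_of_mem fun i _ => hpd.eigenvalues_pos i]
      rw [Finset.card_univ, Fintype.card_fin]
    · rw [negC_eq hx]
      rw [Finset.filter_false_of_mem fun i _ => not_lt.mpr (hpd.eigenvalues_pos i).le]
      exact Finset.card_empty

lemma smul_posDef {x : Matrix (Fin r) (Fin r) ℂ} (hx : x.PosDef) {c : ℝ} (hc : 0 < c) :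
    (c • x).PosDef := by
  have hcs : (c • x) = (c : ℂ) • x := by
    ext i j; simp [Complex.real_smul]
  rw [hcs]
  refine PosDef.of_dotProduct_mulVec_pos ?_ (fun ⦃v⦄ hv => ?_)
  · have := hx.isHermitian
    unfold Matrix.IsHermitian at *
    rw [conjTranspose_smul, this, Complex.star_def, Complex.conj_ofReal]
  · rw [smul_mulVec, dotProduct_smul, smul_eq_mul]
    exact mul_pos (by exact_mod_cast hc) (hx.dotProduct_mulVec_pos hv)

lemma convex_posDef : Convex ℝ {x : Matrix (Fin r) (Fin r) ℂ | x.PosDef} := by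
  intro x hx y hy a b ha hb hab
  rcases ha.eq_or_lt with rfl | ha'
  · rw [zero_add] at hab
    subst hab
    simpa using hy
  rcases hb.eq_or_lt with rfl | hb'
  · rw [add_zero] at hab
    subst hab
    simpa using hx
  exact ((smul_posDef hx ha').add (smul_posDef hy hb') : ((a • x) + (b • y)).PosDef)

lemma cpq_zero_zero_eq : Cpq r 0 0 = {(0 : Matrix (Fin r) (Fin r) ℂ)} := by
  ext x
  rw [mem_Cpq_iff, Set.mem_singleton_iff]
  constructor
  · rintro ⟨hx, h1, h2⟩
    rw [posC_eq hx, Finset.card_eq_zero] at h1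
    rw [negC_eq hx, Finset.card_eq_zero] at h2
    have hev : ∀ i, hx.eigenvalues i = 0 := by
      intro i
      have hp : ¬ 0 < hx.eigenvalues i := by
        intro h
        exact Finset.notMem_empty i (h1 ▸ Finset.mem_filter.mpr ⟨Finset.mem_univ i, h⟩)
      have hn : ¬ hx.eigenvalues i < 0 := by
        intro h
        exact Finset.notMem_empty i (h2 ▸ Finset.mem_filter.mpr ⟨Finset.mem_univ i, h⟩)
      linarith [not_lt.mp hp, not_lt.mp hn]
    have : diagonal (RCLike.ofReal ∘ hx.eigenvalues : Fin r → ℂ) = 0 := by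
      rw [show (RCLike.ofReal ∘ hx.eigenvalues : Fin r → ℂ) = 0 by
        funext i; simp [hev i]]
      exact diagonal_zero
    rw [hx.spectral_theorem, Unitary.conjStarAlgAut_apply, this, mul_zero, zero_mul]
  · rintro rfl
    have hx : (0 : Matrix (Fin r) (Fin r) ℂ).IsHermitian := isHermitian_zero
    have hev : ∀ i, hx.eigenvalues i = 0 := by
      intro i
      rw [hx.eigenvalues_eq]
      simp
    refine ⟨hx, ?_, ?_⟩
    · rw [posC_eq hx, Finset.filter_false_of_mem fun i _ => by rw [hev i]; exact lt_irrefl 0,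
        Finset.card_empty]
    · rw [negC_eq hx, Finset.filter_false_of_mem fun i _ => by rw [hev i]; exact lt_irrefl 0,
        Finset.card_empty]


lemma card_filter_comp (σ : Equiv.Perm (Fin r)) (P : Fin r → Prop) [DecidablePred P] :
    (Finset.univ.filter fun i => P (σ i)).card = (Finset.univ.filter P).card := by
  refine Finset.card_bij (fun i _ => σ i) ?_ ?_ ?_
  · intro a ha
    simp only [Finset.mem_filter, Finset.mem_univ, true_and] at ha ⊢
    exact ha
  · intro a _ b _ hab
    exact σ.injective hab
  · intro b hb
    refine ⟨σ.symm b, ?_, by simp⟩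
    simp only [Finset.mem_filter, Finset.mem_univ, true_and] at hb ⊢
    simpa using hb

def base (p q : ℕ) : Fin r → ℝ := fun i =>
  if (i : ℕ) < p then 1 else if (i : ℕ) < p + q then -1 else 0

lemma base_pos_iff {p q : ℕ} (i : Fin r) : 0 < base p q i ↔ (i : ℕ) < p := by
  unfold base
  by_cases h1 : (i : ℕ) < p
  · norm_num [h1]
  · by_cases h2 : (i : ℕ) < p + q <;> norm_num [h1, h2]

lemma base_neg_iff {p q : ℕ} (i : Fin r) :
    base p q i < 0 ↔ p ≤ (i : ℕ) ∧ (i : ℕ) < p + q := by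
  unfold base
  by_cases h1 : (i : ℕ) < p
  · norm_num [h1]
  · by_cases h2 : (i : ℕ) < p + q <;> norm_num [h1, h2] <;> omega

lemma base_mem {p q : ℕ} (hpq : p + q ≤ r) : Dg (base p q) ∈ Cpq r p q := by
  rw [Dg_mem_iff]
  constructor
  · rw [Finset.filter_congr (fun i _ => by rw [base_pos_iff (p := p) (q := q) i])]
    exact card_filter_lt p (by omega)
  · rw [Finset.filter_congr (fun i _ => by rw [base_neg_iff (p := p) (q := q) i])]
    rw [card_filter_Ico p (p + q) hpq]
    omega

lemma base_perm_mem {p q : ℕ} (hpq : p + q ≤ r) (σ : Equiv.Perm (Fin r)) :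
    Dg (fun i => base p q (σ i)) ∈ Cpq r p q := by
  rw [Dg_mem_iff]
  have h1 := card_filter_comp σ (fun i => 0 < base p q i)
  have h2 := card_filter_comp σ (fun i => base p q i < 0)
  rw [h1, h2]
  exact (Dg_mem_iff (base p q)).mp (base_mem hpq)

lemma half_add (d1 d2 : Fin r → ℝ) :
    (1/2 : ℝ) • Dg d1 + (1/2 : ℝ) • Dg d2 = Dg (fun i => (d1 i + d2 i) / 2) := by
  ext i j
  rcases eq_or_ne i j with rfl | h
  · simp only [Dg, Matrix.add_apply, Matrix.smul_apply, diagonal_apply_eq, Complex.real_smul]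
    push_cast
    ring
  · simp [Dg, Matrix.add_apply, Matrix.smul_apply, diagonal_apply_ne _ h]

lemma not_convex_A {p q : ℕ} (hp : 1 ≤ p) (hq : 1 ≤ q) (hpq : p + q ≤ r) :
    ¬ Convex ℝ (Cpq r p q) := by
  intro hconv
  have hi0 : 0 < r := by omega
  have hj0 : p < r := by omega
  set i0 : Fin r := ⟨0, hi0⟩ with hi0def
  set j0 : Fin r := ⟨p, hj0⟩ with hj0def
  have hne : i0 ≠ j0 := by simp [Fin.ext_iff, hi0def, hj0def]; omega
  set σ : Equiv.Perm (Fin r) := Equiv.swap i0 j0 with hσ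
  set d : Fin r → ℝ := base p q with hd
  have hi0v : (i0 : ℕ) = 0 := rfl
  have hj0v : (j0 : ℕ) = p := rfl
  have hdi0 : d i0 = 1 := by
    simp only [hd, base, hi0v]
    rw [if_pos (by omega)]
  have hdj0 : d j0 = -1 := by
    simp only [hd, base, hj0v]
    rw [if_neg (lt_irrefl p), if_pos (by omega)]
  have hmid := hconv (base_mem hpq) (base_perm_mem hpq σ)
    (by norm_num : (0:ℝ) ≤ 1/2) (by norm_num : (0:ℝ) ≤ 1/2) (by norm_num)
  rw [half_add] at hmid
  set m : Fin r → ℝ := fun i => (d i + d (σ i)) / 2 with hm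
  obtain ⟨hP, _⟩ := (Dg_mem_iff m).mp hmid
  have hset : (Finset.univ.filter fun i => 0 < m i)
      = (Finset.univ.filter fun i : Fin r => (i : ℕ) < p).erase i0 := by
    ext i
    simp only [Finset.mem_filter, Finset.mem_erase, Finset.mem_univ, true_and, and_comm]
    rcases eq_or_ne i i0 with rfl | hii0
    · simp only [hm]
      simp only [hσ, Equiv.swap_apply_left, hdi0, hdj0]
      norm_num
    · rcases eq_or_ne i j0 with rfl | hij0
      · simp only [hm]
        simp only [hσ, Equiv.swap_apply_right, hdi0, hdj0]
        constructor
        · intro h; norm_num at h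
        · rintro ⟨h, _⟩; omega
      · simp only [hm]
        rw [hσ, Equiv.swap_apply_of_ne_of_ne hii0 hij0]
        have : (d i + d i) / 2 = d i := by ring
        rw [this, hd, base_pos_iff]
        exact ⟨fun h => ⟨h, hii0⟩, fun h => h.1⟩
  rw [hset, Finset.card_erase_of_mem (by
      simp only [Finset.mem_filter, Finset.mem_univ, true_and, hi0v]
      omega),
    card_filter_lt p (by omega)] at hP
  omega

lemma not_convex_B {p : ℕ} (hp : 1 ≤ p) (hpr : p < r) :
    ¬ Convex ℝ (Cpq r p 0) := by
  intro hconv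
  have hi0 : 0 < r := by omega
  set i0 : Fin r := ⟨0, hi0⟩ with hi0def
  set j0 : Fin r := ⟨p, hpr⟩ with hj0def
  have hne : i0 ≠ j0 := by simp [Fin.ext_iff, hi0def, hj0def]; omega
  set σ : Equiv.Perm (Fin r) := Equiv.swap i0 j0 with hσ
  set d : Fin r → ℝ := base p 0 with hd
  have hi0v : (i0 : ℕ) = 0 := rfl
  have hj0v : (j0 : ℕ) = p := rfl
  have hdi0 : d i0 = 1 := by
    simp only [hd, base, hi0v]
    rw [if_pos (by omega)]
  have hdj0 : d j0 = 0 := by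
    simp only [hd, base, hj0v]
    rw [if_neg (lt_irrefl p), if_neg (by omega)]
  have hpq : p + 0 ≤ r := by omega
  have hmid := hconv (base_mem hpq) (base_perm_mem hpq σ)
    (by norm_num : (0:ℝ) ≤ 1/2) (by norm_num : (0:ℝ) ≤ 1/2) (by norm_num)
  rw [half_add] at hmid
  set m : Fin r → ℝ := fun i => (d i + d (σ i)) / 2 with hm
  obtain ⟨hP, _⟩ := (Dg_mem_iff m).mp hmid
  have hset : (Finset.univ.filter fun i => 0 < m i)
      = insert j0 (Finset.univ.filter fun i : Fin r => (i : ℕ) < p) := by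
    ext i
    simp only [Finset.mem_filter, Finset.mem_insert, Finset.mem_univ, true_and]
    rcases eq_or_ne i i0 with rfl | hii0
    · simp only [hm]
      simp only [hσ, Equiv.swap_apply_left, hdi0, hdj0]
      constructor
      · intro _; right; omega
      · intro _; norm_num
    · rcases eq_or_ne i j0 with rfl | hij0
      · simp only [hm]
        simp only [hσ, Equiv.swap_apply_right, hdi0, hdj0]
        constructor
        · intro _; simp
        · intro _; norm_num
      · simp only [hm]
        rw [hσ, Equiv.swap_apply_of_ne_of_ne hii0 hij0]
        have : (d i + d i) / 2 = d i := by ring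
        rw [this, hd, base_pos_iff]
        constructor
        · intro h; right; exact h
        · rintro (rfl | h)
          · exact absurd rfl hij0
          · exact h
  rw [hset, Finset.card_insert_of_notMem (by
      simp only [Finset.mem_filter, Finset.mem_univ, true_and, hj0v]
      omega),
    card_filter_lt p (by omega)] at hP
  omega


end CpqAux

/-- `C_{p,q}` is a convex subset of the real vector space of Hermitian `r × r` matrices
if and only if `(p, q)` is `(r, 0)`, `(0, r)` or `(0, 0)`. -/
theorem convex_Cpq_iff {r : ℕ} (hr : 1 ≤ r) (p q : ℕ) (hpq : p + q ≤ r) :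
    Convex ℝ (Cpq r p q) ↔ (p = r ∧ q = 0) ∨ (p = 0 ∧ q = r) ∨ (p = 0 ∧ q = 0) := by
  constructor
  · intro hconv
    by_contra hcon
    push_neg at hcon
    obtain ⟨h1, h2, h3⟩ := hcon
    rcases Nat.eq_zero_or_pos p with hp0 | hp1
    · rcases Nat.eq_zero_or_pos q with hq0 | hq1
      · exact h3 hp0 hq0
      · have hqr : q < r := lt_of_le_of_ne (by omega) (h2 hp0)
        refine CpqAux.not_convex_B hq1 hqr ?_
        have hset : Cpq r q 0 = -(Cpq r 0 q) := by
          ext x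
          rw [Set.mem_neg]
          exact CpqAux.mem_Cpq_neg_iff
        rw [hset]
        subst hp0
        exact hconv.neg
    · rcases Nat.eq_zero_or_pos q with hq0 | hq1
      · have hpr : p < r := lt_of_le_of_ne (by omega) (fun h => h1 h hq0)
        subst hq0
        exact CpqAux.not_convex_B hp1 hpr hconv
      · exact CpqAux.not_convex_A hp1 hq1 hpq hconv
  · have hset : ∀ n : ℕ, Cpq n 0 n = -(Cpq n n 0) := fun n => by
      ext x
      rw [Set.mem_neg]
      exact CpqAux.mem_Cpq_neg_iff
    rintro (⟨rfl, rfl⟩ | ⟨rfl, rfl⟩ | ⟨rfl, rfl⟩)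
    · rw [CpqAux.cpq_r_zero_eq]
      exact CpqAux.convex_posDef
    · rw [hset, CpqAux.cpq_r_zero_eq]
      exact CpqAux.convex_posDef.neg
    · rw [CpqAux.cpq_zero_zero_eq]
      exact convex_singleton 0
end

section
/- If p ≥ 1, q ≥ 1 and p + q = r, then the convex hull of C_{p,q} is the whole real vector space Herm(r) of Hermitian r×r complex matrices. -/
open Matrix Polynomial

lemma charpoly_unitary_conj {n : Type*} [Fintype n] [DecidableEq n]
    (U : Matrix.unitaryGroup n ℂ) (N : Matrix n n ℂ) :
    ((U : Matrix n n ℂ) * N * star (U : Matrix n n ℂ)).charpoly = N.charpoly := by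
  let f : Matrix n n ℂ →+* Matrix n n (Polynomial ℂ) :=
    (Polynomial.C : ℂ →+* Polynomial ℂ).mapMatrix
  have h1 : f (U : Matrix n n ℂ) * f (star (U : Matrix n n ℂ)) = 1 := by
    rw [← _root_.map_mul, Unitary.mul_star_self_of_mem U.2, _root_.map_one]
  have h2 : f (star (U : Matrix n n ℂ)) * f (U : Matrix n n ℂ) = 1 := by
    rw [← _root_.map_mul, Unitary.star_mul_self_of_mem U.2, _root_.map_one]
  have hcomm : ∀ A : Matrix n n (Polynomial ℂ),
      A * Matrix.scalar n (X : Polynomial ℂ) = Matrix.scalar n (X : Polynomial ℂ) * A :=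
    fun A => (Matrix.scalar_commute (X : Polynomial ℂ) (fun r => Commute.all _ _) A).symm
  have key : f (U : Matrix n n ℂ) * charmatrix N * f (star (U : Matrix n n ℂ))
      = charmatrix ((U : Matrix n n ℂ) * N * star (U : Matrix n n ℂ)) := by
    simp only [charmatrix, mul_sub, sub_mul, ← _root_.map_mul]
    congr 1
    rw [mul_assoc, ← hcomm, ← mul_assoc, h1, one_mul]
    simp only [f, _root_.map_mul]
  rw [Matrix.charpoly, Matrix.charpoly, ← key, Matrix.det_mul, Matrix.det_mul, mul_comm,
    ← mul_assoc, ← Matrix.det_mul, h2, Matrix.det_one, one_mul]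

lemma charpoly_diagonal' {n : Type*} [Fintype n] [DecidableEq n] (v : n → ℂ) :
    (Matrix.diagonal v).charpoly = ∏ i, (X - C (v i)) := by
  rw [Matrix.charpoly, ← Matrix.det_diagonal]
  congr 1
  ext i j
  by_cases h : i = j <;> simp [h, charmatrix_apply, diagonal_apply]

lemma eigenvalues_multiset_eq {n : Type*} [Fintype n] [DecidableEq n]
    {M : Matrix n n ℂ} (hM : M.IsHermitian) (U : Matrix.unitaryGroup n ℂ) (d : n → ℝ)
    (h : M = (U : Matrix n n ℂ) * Matrix.diagonal (fun i => (d i : ℂ))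
      * star (U : Matrix n n ℂ)) :
    Finset.univ.val.map hM.eigenvalues = Finset.univ.val.map d := by
  have key : ∀ (V : Matrix.unitaryGroup n ℂ) (e : n → ℝ),
      M = (V : Matrix n n ℂ) * Matrix.diagonal (fun i => (e i : ℂ))
        * star (V : Matrix n n ℂ) →
      M.charpoly.roots = Finset.univ.val.map (fun i => (e i : ℂ)) := by
    intro V e hV
    rw [hV, charpoly_unitary_conj, charpoly_diagonal', Finset.prod_eq_multiset_prod,
      show (Multiset.map (fun i => X - C ((e i : ℂ))) Finset.univ.val)
          = Multiset.map (fun a => X - C a) (Multiset.map (fun i => ((e i : ℂ))) Finset.univ.val)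
        by rw [Multiset.map_map]; rfl,
      Polynomial.roots_multiset_prod_X_sub_C]
  have h1 := key U d h
  have h2 := key hM.eigenvectorUnitary hM.eigenvalues hM.spectral_theorem
  rw [h1] at h2
  apply Multiset.map_injective (f := Complex.ofReal) Complex.ofReal_injective
  rw [Multiset.map_map, Multiset.map_map]
  exact h2.symm

lemma card_filter_eq_of_multiset_map_eq {n : Type*} [Fintype n] (f g : n → ℝ)
    (h : Finset.univ.val.map f = Finset.univ.val.map g) (P : ℝ → Prop) [DecidablePred P] :
    (Finset.univ.filter fun i => P (f i)).card = (Finset.univ.filter fun i => P (g i)).card := by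
  have h2 := congrArg (fun s => Multiset.card (Multiset.filter P s)) h
  simp only [Multiset.filter_map, Multiset.card_map] at h2
  rw [Finset.card_filter, Finset.card_filter] at *
  simpa [Finset.card_def, Finset.filter_val] using h2

/-- If `p ≥ 1`, `q ≥ 1` and `p + q = r`, the convex hull (over `ℝ`) of `C_{p,q}` is the whole
real vector space of Hermitian `r × r` complex matrices. -/
theorem convexHull_Cpq {r : ℕ} (p q : ℕ) (hp : 1 ≤ p) (hq : 1 ≤ q) (hpq : p + q = r) :
    convexHull ℝ (Cpq r p q) = {x : Matrix (Fin r) (Fin r) ℂ | x.IsHermitian} := by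
  have hr : 0 < r := by omega
  haveI : NeZero r := ⟨hr.ne'⟩
  apply Set.Subset.antisymm
  · apply convexHull_min
    · rintro x ⟨hx, -, -⟩; exact hx
    · intro x hx y hy a b _ _ _
      show (a • x + b • y).IsHermitian
      simp only [Matrix.IsHermitian, Matrix.conjTranspose_add, Matrix.conjTranspose_smul,
        star_trivial, hx.eq, hy.eq]
  · intro x hx
    set lam : Fin r → ℝ := hx.eigenvalues with hlam
    set U := hx.eigenvectorUnitary with hU
    set t : ℝ := 1 + ∑ i, |lam i| with htdef
    have ht0 : 0 < t := by
      have : (0:ℝ) ≤ ∑ i, |lam i| := Finset.sum_nonneg fun i _ => abs_nonneg _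
      linarith
    have ht : ∀ i, |lam i| < t := by
      intro i
      have h1 : |lam i| ≤ ∑ j, |lam j| :=
        Finset.single_le_sum (fun j _ => abs_nonneg (lam j)) (Finset.mem_univ i)
      linarith
    set σ : Fin r → Fin r → ℝ :=
      fun k i => if ((i - k : Fin r) : ℕ) < p then t * q else -(t * p) with hσ
    set d : Fin r → Fin r → ℝ := fun k i => lam i + σ k i with hd
    set M : Fin r → Matrix (Fin r) (Fin r) ℂ :=
      fun k => (U : Matrix (Fin r) (Fin r) ℂ) * Matrix.diagonal (fun i => (d k i : ℂ))
        * star (U : Matrix (Fin r) (Fin r) ℂ) with hM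
    have hMherm : ∀ k, (M k).IsHermitian := by
      intro k
      rw [hM]
      rw [Matrix.star_eq_conjTranspose]
      exact Matrix.isHermitian_mul_mul_conjTranspose _
        (Matrix.isHermitian_diagonal_of_self_adjoint _ (by
          show star _ = _
          funext i
          exact Complex.conj_ofReal _))
    -- positivity/negativity of the shifted eigenvalues
    have hdpos : ∀ k i, ((i - k : Fin r) : ℕ) < p → 0 < d k i := by
      intro k i hcond
      have h1 : t ≤ t * q := by
        nth_rewrite 1 [← mul_one t]
        apply mul_le_mul_of_nonneg_left _ ht0.le
        exact_mod_cast hq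
      have h2 := (abs_lt.mp (ht i)).1
      simp only [hd, hσ, hcond, if_true]
      linarith
    have hdneg : ∀ k i, ¬ ((i - k : Fin r) : ℕ) < p → d k i < 0 := by
      intro k i hcond
      have h1 : t ≤ t * p := by
        nth_rewrite 1 [← mul_one t]
        apply mul_le_mul_of_nonneg_left _ ht0.le
        exact_mod_cast hp
      have h2 := (abs_lt.mp (ht i)).2
      simp only [hd, hσ, hcond, if_false]
      linarith
    -- counting
    have hshift : ∀ (k : Fin r),
        (Finset.univ.filter fun i : Fin r => ((i - k : Fin r) : ℕ) < p).card
          = (Finset.univ.filter fun j : Fin r => (j : ℕ) < p).card := by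
      intro k
      apply Finset.card_bij' (fun i _ => i - k) (fun j _ => j + k)
      · intro i hi
        simp only [Finset.mem_filter, Finset.mem_univ, true_and] at hi ⊢
        exact hi
      · intro j hj
        simp only [Finset.mem_filter, Finset.mem_univ, true_and] at hj ⊢
        simpa using hj
      · intro i _; simp
      · intro j _; simp
    have hIio : (Finset.univ.filter fun j : Fin r => (j : ℕ) < p).card = p := by
      have hpr : p < r := by omega
      have : (Finset.univ.filter fun j : Fin r => (j : ℕ) < p)
          = Finset.Iio (⟨p, hpr⟩ : Fin r) := by
        ext j
        simp [Fin.lt_def]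
      rw [this, Fin.card_Iio]
    have hcard1 : ∀ k, (Finset.univ.filter fun i : Fin r =>
        ((i - k : Fin r) : ℕ) < p).card = p := fun k => (hshift k).trans hIio
    have hcard2 : ∀ k, (Finset.univ.filter fun i : Fin r =>
        ¬ ((i - k : Fin r) : ℕ) < p).card = q := by
      intro k
      have := Finset.card_filter_add_card_filter_not
        (s := (Finset.univ : Finset (Fin r)))
        (p := fun i : Fin r => ((i - k : Fin r) : ℕ) < p)
      rw [hcard1 k] at this
      simp only [Finset.card_univ, Fintype.card_fin] at this
      omega
    -- each M k is in Cpq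
    have hMmem : ∀ k, M k ∈ Cpq r p q := by
      intro k
      refine ⟨hMherm k, ?_, ?_⟩
      · have hms := eigenvalues_multiset_eq (hMherm k) U (d k) rfl
        have := card_filter_eq_of_multiset_map_eq _ _ hms (fun x => 0 < x)
        rw [this, ← hcard1 k]
        congr 1
        ext i
        simp only [Finset.mem_filter, Finset.mem_univ, true_and]
        constructor
        · intro h
          by_contra hc
          exact absurd (hdneg k i hc) (by linarith)
        · exact hdpos k i
      · have hms := eigenvalues_multiset_eq (hMherm k) U (d k) rfl
        have := card_filter_eq_of_multiset_map_eq _ _ hms (fun x => x < 0)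
        rw [this, ← hcard2 k]
        congr 1
        ext i
        simp only [Finset.mem_filter, Finset.mem_univ, true_and]
        constructor
        · intro h
          intro hc
          exact absurd (hdpos k i hc) (by linarith)
        · exact hdneg k i
    -- the sum of the d's
    have hdsum : ∀ i, ∑ k, d k i = (r : ℝ) * lam i := by
      intro i
      have hσsum : ∑ k, σ k i = 0 := by
        have he : ∑ k, σ k i
            = ∑ j : Fin r, (if (j : ℕ) < p then t * q else -(t * p)) := by
          apply Fintype.sum_equiv (Equiv.subLeft i)
          intro k
          rfl
        rw [he, Finset.sum_ite, Finset.sum_const, Finset.sum_const, hIio]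
        have : (Finset.univ.filter fun j : Fin r => ¬ (j : ℕ) < p).card = q := by
          have := Finset.card_filter_add_card_filter_not
            (s := (Finset.univ : Finset (Fin r))) (p := fun j : Fin r => (j : ℕ) < p)
          rw [hIio] at this
          simp only [Finset.card_univ, Fintype.card_fin] at this
          omega
        rw [this]
        simp only [nsmul_eq_mul]
        ring
      simp only [hd]
      rw [Finset.sum_add_distrib, hσsum, add_zero, Finset.sum_const, Finset.card_univ,
        Fintype.card_fin, nsmul_eq_mul]
    -- sum of the matrices
    have hMsum : ∑ k, M k = (r : ℝ) • x := by
      have hdiagsum : ∑ k, Matrix.diagonal (fun i => (d k i : ℂ))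
          = Matrix.diagonal (fun i => (((r : ℝ) * lam i : ℝ) : ℂ)) := by
        rw [show (∑ k, Matrix.diagonal (fun i => (d k i : ℂ)))
            = Matrix.diagonal (∑ k, fun i => (d k i : ℂ)) from
          (map_sum (Matrix.diagonalAddMonoidHom (Fin r) ℂ) _ _).symm]
        have hfun : (∑ k, fun i => (d k i : ℂ)) = fun i => (((r : ℝ) * lam i : ℝ) : ℂ) := by
          funext i
          rw [Finset.sum_apply, ← Complex.ofReal_sum]
          norm_cast
          exact hdsum i
        rw [hfun]
      calc ∑ k, M k
          = (U : Matrix (Fin r) (Fin r) ℂ)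
            * (∑ k, Matrix.diagonal (fun i => (d k i : ℂ)))
            * star (U : Matrix (Fin r) (Fin r) ℂ) := by
            rw [Finset.mul_sum, Finset.sum_mul]
        _ = (r : ℝ) • x := by
            rw [hdiagsum]
            have hxeq : x = (U : Matrix (Fin r) (Fin r) ℂ)
                * Matrix.diagonal (RCLike.ofReal ∘ lam)
                * star (U : Matrix (Fin r) (Fin r) ℂ) := hx.spectral_theorem
            rw [hxeq,
              show ((r : ℝ) • ((U : Matrix (Fin r) (Fin r) ℂ)
                  * Matrix.diagonal (RCLike.ofReal ∘ lam)
                  * star (U : Matrix (Fin r) (Fin r) ℂ)))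
                = (U : Matrix (Fin r) (Fin r) ℂ)
                  * ((r : ℝ) • Matrix.diagonal (RCLike.ofReal ∘ lam))
                  * star (U : Matrix (Fin r) (Fin r) ℂ) from by
                rw [Matrix.mul_smul, Matrix.smul_mul]]
            congr 2
            have hfun2 : (fun i => (((r : ℝ) * lam i : ℝ) : ℂ))
                = (r : ℝ) • (RCLike.ofReal ∘ lam) := by
              funext i
              show ((((r:ℕ):ℝ) * lam i : ℝ) : ℂ) = (r : ℝ) • ((lam i : ℝ) : ℂ)
              rw [Complex.real_smul]
              push_cast
              ring
            rw [hfun2, Matrix.diagonal_smul]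
    -- conclude
    have : Finset.univ.centerMass (fun _ : Fin r => (1 : ℝ)) M ∈ convexHull ℝ (Cpq r p q) := by
      apply Finset.centerMass_mem_convexHull
      · intro i _; norm_num
      · simp only [Finset.sum_const, Finset.card_univ, Fintype.card_fin, nsmul_eq_mul, mul_one]
        exact_mod_cast hr
      · intro i _; exact hMmem i
    have hcm : Finset.univ.centerMass (fun _ : Fin r => (1 : ℝ)) M = x := by
      rw [Finset.centerMass]
      simp only [Finset.sum_const, Finset.card_univ, Fintype.card_fin, nsmul_eq_mul, mul_one,
        one_smul]
      rw [hMsum, smul_smul, inv_mul_cancel₀ (by exact_mod_cast hr.ne' : (r:ℝ) ≠ 0), one_smul]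
    rwa [hcm] at this
end

section
/- Let m ≥ 3 and let Ω = {x ∈ ℝ^m : x₁ > √(x₂² + ⋯ + x_m²)} be the open future light cone. A linear automorphism g ∈ GL(m, ℝ) satisfies g(Ω) = Ω if and only if g = t·L for some real number t > 0 and some matrix L ∈ GL(m, ℝ) with Lᵀ η L = η and L₁₁ > 0, where η = diag(1, −1, …, −1); that is, the group of linear automorphisms of Ω is the group of positive scalar multiples of orthochronous Lorentz transformations. -/
open Matrix

/-- The open future light cone in `ℝᵐ`: the set of `x` with `x₁ > √(x₂² + ⋯ + x_m²)`. -/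
def futureCone (m : ℕ) [NeZero m] : Set (Fin m → ℝ) :=
  {x | Real.sqrt (∑ i ∈ Finset.univ.erase 0, x i ^ 2) < x 0}

/-- The Lorentz form matrix `η = diag(1, −1, …, −1)`. -/
def lorentzEta (m : ℕ) [NeZero m] : Matrix (Fin m) (Fin m) ℝ :=
  Matrix.diagonal fun i => if i = 0 then 1 else -1

namespace LightConeAux

variable {m : ℕ} [NeZero m]

/-- The spatial norm. -/
noncomputable def S (x : Fin m → ℝ) : ℝ :=
  Real.sqrt (∑ i ∈ Finset.univ.erase 0, x i ^ 2)

/-- The Lorentz quadratic form. -/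
def Q (x : Fin m → ℝ) : ℝ := x 0 ^ 2 - ∑ i ∈ Finset.univ.erase 0, x i ^ 2

lemma S_nonneg (x : Fin m → ℝ) : 0 ≤ S x := Real.sqrt_nonneg _

lemma sq_S (x : Fin m → ℝ) : S x ^ 2 = ∑ i ∈ Finset.univ.erase 0, x i ^ 2 :=
  Real.sq_sqrt (Finset.sum_nonneg fun _ _ => sq_nonneg _)

lemma Q_eq (x : Fin m → ℝ) : Q x = x 0 ^ 2 - S x ^ 2 := by rw [sq_S]; rfl

lemma mem_iff (x : Fin m → ℝ) : x ∈ futureCone m ↔ S x < x 0 := Iff.rfl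

lemma mem_iff' (x : Fin m → ℝ) : x ∈ futureCone m ↔ 0 < x 0 ∧ 0 < Q x := by
  rw [mem_iff]
  constructor
  · intro h
    have hx0 : 0 < x 0 := lt_of_le_of_lt (S_nonneg x) h
    refine ⟨hx0, ?_⟩
    rw [Q_eq]
    have : S x ^ 2 < x 0 ^ 2 := by
      apply pow_lt_pow_left₀ h (S_nonneg x)
      norm_num
    linarith
  · rintro ⟨h0, hQ⟩
    rw [Q_eq] at hQ
    have h2 : S x ^ 2 < x 0 ^ 2 := by linarith
    exact lt_of_pow_lt_pow_left₀ 2 h0.le h2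

lemma dot_eta (x : Fin m → ℝ) : x ⬝ᵥ (lorentzEta m *ᵥ x) = Q x := by
  rw [Q, dotProduct, ← Finset.add_sum_erase _ _ (Finset.mem_univ (0 : Fin m))]
  congr 1
  · rw [lorentzEta, mulVec_diagonal, if_pos rfl]
    ring
  · rw [← Finset.sum_neg_distrib]
    apply Finset.sum_congr rfl
    intro i hi
    rw [lorentzEta, mulVec_diagonal, if_neg (Finset.ne_of_mem_erase hi)]
    ring

lemma q_conj (g : Matrix (Fin m) (Fin m) ℝ) (x : Fin m → ℝ) :
    x ⬝ᵥ ((gᵀ * lorentzEta m * g) *ᵥ x) = Q (g *ᵥ x) := by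
  rw [← mulVec_mulVec, ← mulVec_mulVec, dotProduct_mulVec, vecMul_transpose, dot_eta]

lemma eta_sym : (lorentzEta m)ᵀ = lorentzEta m := diagonal_transpose _

lemma eta_mul_eta : (lorentzEta m) * (lorentzEta m) = 1 := by
  rw [lorentzEta, diagonal_mul_diagonal]
  have : (fun i : Fin m => (if i = 0 then (1:ℝ) else -1) * (if i = 0 then 1 else -1))
      = fun _ => (1:ℝ) := by
    funext i
    by_cases h : i = 0 <;> simp [h]
  rw [this, diagonal_one]

lemma Q_single0 (a : ℝ) : Q (Pi.single (0 : Fin m) a : Fin m → ℝ) = a ^ 2 := by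
  rw [Q, Pi.single_eq_same]
  have : ∀ i ∈ Finset.univ.erase (0 : Fin m), (Pi.single 0 a : Fin m → ℝ) i ^ 2 = 0 := by
    intro i hi
    rw [Pi.single_eq_of_ne (Finset.ne_of_mem_erase hi)]
    ring
  rw [Finset.sum_congr rfl this]
  simp

lemma sum_erase_two (j k : Fin m) (hj : j ≠ 0) (hk : k ≠ 0) (hjk : j ≠ k) (f : Fin m → ℝ)
    (hf : ∀ i, i ≠ 0 → i ≠ j → i ≠ k → f i = 0) :
    ∑ i ∈ Finset.univ.erase 0, f i = f j + f k := by
  rw [← Finset.sum_pair hjk]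
  apply (Finset.sum_subset _ _).symm
  · intro i hi
    rcases Finset.mem_insert.mp hi with h | h
    · exact Finset.mem_erase.mpr ⟨h ▸ hj, Finset.mem_univ _⟩
    · rw [Finset.mem_singleton] at h
      exact Finset.mem_erase.mpr ⟨h ▸ hk, Finset.mem_univ _⟩
  · intro i hi0 hi
    rw [Finset.mem_insert, Finset.mem_singleton] at hi
    push_neg at hi
    exact hf i (Finset.ne_of_mem_erase hi0) hi.1 hi.2

lemma sum_erase_one (j : Fin m) (hj : j ≠ 0) (f : Fin m → ℝ)
    (hf : ∀ i, i ≠ 0 → i ≠ j → f i = 0) :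
    ∑ i ∈ Finset.univ.erase 0, f i = f j := by
  rw [← Finset.sum_singleton f j]
  apply (Finset.sum_subset _ _).symm
  · intro i hi
    rw [Finset.mem_singleton] at hi
    exact Finset.mem_erase.mpr ⟨hi ▸ hj, Finset.mem_univ _⟩
  · intro i hi0 hi
    rw [Finset.mem_singleton] at hi
    exact hf i (Finset.ne_of_mem_erase hi0) hi

lemma Q_two (j : Fin m) (hj : j ≠ 0) (a b : ℝ) :
    Q ((Pi.single 0 a : Fin m → ℝ) + Pi.single j b) = a ^ 2 - b ^ 2 := by
  rw [Q]
  have h0 : (Pi.single 0 a + Pi.single j b : Fin m → ℝ) 0 = a := by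
    simp [Pi.single_eq_of_ne (Ne.symm hj)]
  rw [h0]
  congr 1
  rw [sum_erase_one j hj]
  · simp [Pi.single_eq_of_ne hj]
  · intro i hi0 hij
    simp [Pi.single_eq_of_ne hi0, Pi.single_eq_of_ne hij]

lemma Q_three (j k : Fin m) (hj : j ≠ 0) (hk : k ≠ 0) (hjk : j ≠ k) (a b c : ℝ) :
    Q ((Pi.single 0 a : Fin m → ℝ) + Pi.single j b + Pi.single k c) = a ^ 2 - b ^ 2 - c ^ 2 := by
  rw [Q]
  have h0 : (Pi.single 0 a + Pi.single j b + Pi.single k c : Fin m → ℝ) 0 = a := by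
    simp [Pi.single_eq_of_ne (Ne.symm hj), Pi.single_eq_of_ne (Ne.symm hk)]
  rw [h0]
  rw [sum_erase_two j k hj hk hjk]
  · have hvj : (Pi.single 0 a + Pi.single j b + Pi.single k c : Fin m → ℝ) j = b := by
      simp [Pi.single_eq_of_ne hj, Pi.single_eq_of_ne hjk]
    have hvk : (Pi.single 0 a + Pi.single j b + Pi.single k c : Fin m → ℝ) k = c := by
      simp [Pi.single_eq_of_ne hk, Pi.single_eq_of_ne (Ne.symm hjk)]
    rw [hvj, hvk]; ring
  · intro i hi0 hij hik
    simp [Pi.single_eq_of_ne hi0, Pi.single_eq_of_ne hij, Pi.single_eq_of_ne hik]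

lemma q_single (M : Matrix (Fin m) (Fin m) ℝ) (i j : Fin m) (a b : ℝ) :
    (Pi.single i a) ⬝ᵥ (M *ᵥ Pi.single j b) = a * (M i j * b) := by
  rw [mulVec_single, single_dotProduct]
  rfl

lemma q_expand2 (M : Matrix (Fin m) (Fin m) ℝ) (i j : Fin m) (a b : ℝ) :
    (Pi.single i a + Pi.single j b) ⬝ᵥ (M *ᵥ (Pi.single i a + Pi.single j b))
      = a * (M i i * a) + a * (M i j * b) + b * (M j i * a) + b * (M j j * b) := by
  simp only [mulVec_add, add_dotProduct, dotProduct_add, q_single]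
  ring

lemma q_expand3 (M : Matrix (Fin m) (Fin m) ℝ) (i j k : Fin m) (a b c : ℝ) :
    (Pi.single i a + Pi.single j b + Pi.single k c) ⬝ᵥ
      (M *ᵥ (Pi.single i a + Pi.single j b + Pi.single k c))
      = a * (M i i * a) + a * (M i j * b) + a * (M i k * c)
        + b * (M j i * a) + b * (M j j * b) + b * (M j k * c)
        + c * (M k i * a) + c * (M k j * b) + c * (M k k * c) := by
  simp only [mulVec_add, add_dotProduct, dotProduct_add, q_single]
  ring

/-- A symmetric matrix whose quadratic form vanishes on the Lorentz null cone is a multiple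
of `η`. -/
lemma eq_smul_eta (M : Matrix (Fin m) (Fin m) ℝ) (hsym : Mᵀ = M)
    (h : ∀ x : Fin m → ℝ, Q x = 0 → x ⬝ᵥ (M *ᵥ x) = 0) :
    M = M 0 0 • lorentzEta m := by
  have hsym' : ∀ i j, M j i = M i j := fun i j => congrFun (congrFun hsym i) j
  have key2 : ∀ j : Fin m, j ≠ 0 → M 0 j = 0 ∧ M j j = -(M 0 0) := by
    intro j hj
    have h1 := h ((Pi.single 0 1 : Fin m → ℝ) + Pi.single j 1) (by rw [Q_two j hj]; ring)
    have h2 := h ((Pi.single 0 1 : Fin m → ℝ) + Pi.single j (-1)) (by rw [Q_two j hj]; ring)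
    rw [q_expand2] at h1 h2
    have hs := hsym' 0 j
    constructor <;> nlinarith [h1, h2, hs]
  have key3 : ∀ j k : Fin m, j ≠ 0 → k ≠ 0 → j ≠ k → M j k = 0 := by
    intro j k hj hk hjk
    have h1 := h ((Pi.single 0 (Real.sqrt 2) : Fin m → ℝ) + Pi.single j 1 + Pi.single k 1)
      (by rw [Q_three j k hj hk hjk, Real.sq_sqrt (by norm_num : (0:ℝ) ≤ 2)]; ring)
    rw [q_expand3] at h1
    have e1 := (key2 j hj).1
    have e2 := (key2 k hk).1
    have e3 := (key2 j hj).2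
    have e4 := (key2 k hk).2
    have e5 := hsym' 0 j
    have e6 := hsym' 0 k
    have e7 := hsym' j k
    rw [e1, e2, e3, e4, e5, e1, e6, e2, e7] at h1
    have s2 : Real.sqrt 2 * Real.sqrt 2 = 2 := Real.mul_self_sqrt (by norm_num)
    have hh : Real.sqrt 2 * (M 0 0 * Real.sqrt 2) = 2 * M 0 0 := by
      rw [show Real.sqrt 2 * (M 0 0 * Real.sqrt 2)
        = Real.sqrt 2 * Real.sqrt 2 * M 0 0 by ring, s2]
    linarith
  ext i j
  rw [Matrix.smul_apply, lorentzEta, diagonal_apply, smul_eq_mul]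
  by_cases hi : i = 0 <;> by_cases hj : j = 0
  · subst hi; subst hj; simp
  · subst hi
    rw [if_neg (by simpa using Ne.symm hj)]
    simpa using (key2 j hj).1
  · subst hj
    rw [if_neg (by simpa using hi)]
    rw [hsym' 0 i]
    simpa using (key2 i hi).1
  · by_cases hij : i = j
    · subst hij
      rw [if_pos rfl, if_neg hi]
      rw [(key2 i hi).2]; ring
    · rw [if_neg hij]
      rw [key3 i j hi hj hij]; ring

lemma S_continuous : Continuous (S : (Fin m → ℝ) → ℝ) :=
  Real.continuous_sqrt.comp (continuous_finset_sum _ fun i _ => (continuous_apply i).pow 2)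

lemma Q_neg (x : Fin m → ℝ) : Q (-x) = Q x := by
  simp [Q, Pi.neg_apply, neg_sq]

lemma Q_smul (t : ℝ) (x : Fin m → ℝ) : Q (t • x) = t ^ 2 * Q x := by
  simp only [Q, Pi.smul_apply, smul_eq_mul, mul_pow, Finset.mul_sum, mul_sub]

lemma e0_mem : (Pi.single 0 1 : Fin m → ℝ) ∈ futureCone m := by
  rw [mem_iff', Pi.single_eq_same]
  refine ⟨one_pos, ?_⟩
  rw [Q_single0]
  norm_num

lemma smul_mem_iff {t : ℝ} (ht : 0 < t) (x : Fin m → ℝ) :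
    t • x ∈ futureCone m ↔ x ∈ futureCone m := by
  rw [mem_iff', mem_iff', Q_smul, Pi.smul_apply, smul_eq_mul]
  constructor
  · rintro ⟨h1, h2⟩
    constructor
    · nlinarith
    · nlinarith [sq_nonneg t]
  · rintro ⟨h1, h2⟩
    exact ⟨mul_pos ht h1, mul_pos (pow_pos ht 2) h2⟩

lemma eta_mul_eta_mul (X : Matrix (Fin m) (Fin m) ℝ) :
    lorentzEta m * (lorentzEta m * X) = X := by
  rw [← Matrix.mul_assoc, eta_mul_eta, one_mul]

lemma lorentz_inv_right (K : Matrix (Fin m) (Fin m) ℝ)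
    (hK : Kᵀ * lorentzEta m * K = lorentzEta m) :
    K * (lorentzEta m * Kᵀ * lorentzEta m) = 1 := by
  apply mul_eq_one_comm.mp
  rw [Matrix.mul_assoc, Matrix.mul_assoc, ← Matrix.mul_assoc Kᵀ, hK, eta_mul_eta]

lemma lorentz_transpose (K : Matrix (Fin m) (Fin m) ℝ)
    (hK : Kᵀ * lorentzEta m * K = lorentzEta m) :
    K * lorentzEta m * Kᵀ = lorentzEta m := by
  have h2 := lorentz_inv_right K hK
  have h4 : (K * (lorentzEta m * Kᵀ * lorentzEta m)) * lorentzEta m = lorentzEta m := by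
    rw [h2, one_mul]
  calc K * lorentzEta m * Kᵀ
      = (K * (lorentzEta m * Kᵀ * lorentzEta m)) * lorentzEta m := by
        simp only [Matrix.mul_assoc, eta_mul_eta_mul, eta_mul_eta, Matrix.mul_one]
    _ = lorentzEta m := h4

/-- The key membership lemma: an orthochronous Lorentz matrix maps the cone into itself. -/
lemma lorentz_maps_cone (K : Matrix (Fin m) (Fin m) ℝ)
    (hK : Kᵀ * lorentzEta m * K = lorentzEta m) (hK3 : K * lorentzEta m * Kᵀ = lorentzEta m)
    (hK00 : 0 < K 0 0) {x : Fin m → ℝ} (hx : x ∈ futureCone m) : K *ᵥ x ∈ futureCone m := by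
  rw [mem_iff'] at hx ⊢
  obtain ⟨hx0, hQx⟩ := hx
  have hQK : Q (K *ᵥ x) = Q x := by rw [← q_conj, hK, dot_eta]
  -- the row identity
  have hrow : Q (fun j => K 0 j) = 1 := by
    have hfun : (fun j => K 0 j) = Kᵀ *ᵥ (Pi.single 0 1 : Fin m → ℝ) := by
      funext j
      rw [mulVec_single]
      simp
    rw [hfun, ← q_conj, transpose_transpose, hK3, dot_eta, Q_single0]
    norm_num
  rw [Q] at hrow
  have hA : ∑ j ∈ Finset.univ.erase 0, (K 0 j) ^ 2 = K 0 0 ^ 2 - 1 := by linarith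
  have hAnn : (0:ℝ) ≤ K 0 0 ^ 2 - 1 := by
    rw [← hA]; exact Finset.sum_nonneg fun _ _ => sq_nonneg _
  have hKx0 : (K *ᵥ x) 0 = K 0 0 * x 0 + ∑ j ∈ Finset.univ.erase 0, K 0 j * x j := by
    rw [mulVec, dotProduct, ← Finset.add_sum_erase _ _ (Finset.mem_univ (0 : Fin m))]
  have cs := Finset.sum_mul_sq_le_sq_mul_sq (Finset.univ.erase (0:Fin m)) (fun j => K 0 j) x
  rw [hA, ← sq_S] at cs
  have hSx : S x ^ 2 < x 0 ^ 2 := by rw [Q_eq] at hQx; linarith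
  have hpos : 0 < (K *ᵥ x) 0 := by
    rw [hKx0]
    nlinarith [cs, hSx, hAnn, S_nonneg x, sq_nonneg (S x), mul_pos hK00 hx0,
      sq_nonneg (K 0 0 * x 0)]
  exact ⟨hpos, by rw [hQK]; exact hQx⟩

end LightConeAux

/-- For `m ≥ 3`, an invertible linear map `g` of `ℝᵐ` maps the open future light cone `Ω` onto
itself if and only if `g = t • L` for some `t > 0` and some `L ∈ GL(m, ℝ)` with `Lᵀ η L = η`
and `L₁₁ > 0`: the linear automorphisms of `Ω` are the positive multiples of orthochronous
Lorentz transformations. -/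
theorem lightCone_linear_automorphisms {m : ℕ} [NeZero m] (hm : 3 ≤ m)
    (g : Matrix (Fin m) (Fin m) ℝ) (hg : IsUnit g) :
    g.mulVec '' futureCone m = futureCone m ↔
      ∃ t : ℝ, 0 < t ∧ ∃ L : Matrix (Fin m) (Fin m) ℝ, IsUnit L ∧
        Lᵀ * lorentzEta m * L = lorentzEta m ∧ 0 < L 0 0 ∧ g = t • L := by
  open LightConeAux in
  constructor
  · -- forward direction
    intro hΩ
    have hinj : Function.Injective g.mulVec := mulVec_injective_iff_isUnit.mpr hg
    have hge0 : g *ᵥ (Pi.single 0 1 : Fin m → ℝ) ∈ futureCone m :=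
      hΩ ▸ Set.mem_image_of_mem _ e0_mem
    -- forward null vectors are mapped into the closed cone
    have claim1 : ∀ x : Fin m → ℝ, S x = x 0 → S (g *ᵥ x) ≤ (g *ᵥ x) 0 := by
      intro x hx
      set e0 : Fin m → ℝ := Pi.single 0 1 with he0
      set ψ : ℝ → (Fin m → ℝ) := fun ε => g *ᵥ x + ε • (g *ᵥ e0) with hψdef
      have hψc : Continuous ψ := continuous_const.add (continuous_id.smul continuous_const)
      set φ : ℝ → ℝ := fun ε => ψ ε 0 - S (ψ ε) with hφdef
      have hφc : Continuous φ :=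
        ((continuous_apply (0 : Fin m)).comp hψc).sub (S_continuous.comp hψc)
      have hφpos : ∀ ε ∈ Set.Ioi (0:ℝ), 0 ≤ φ ε := by
        intro ε hε
        have hmem : x + ε • e0 ∈ futureCone m := by
          rw [mem_iff]
          have hS : S (x + ε • e0) = S x := by
            rw [S, S]
            congr 1
            apply Finset.sum_congr rfl
            intro i hi
            have h0 : e0 i = 0 := Pi.single_eq_of_ne (Finset.ne_of_mem_erase hi) 1
            simp [h0]
          have hx0 : (x + ε • e0) 0 = x 0 + ε := by simp [he0]
          rw [hS, hx0, hx]
          linarith [Set.mem_Ioi.mp hε]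
        have hgmem : g *ᵥ (x + ε • e0) ∈ futureCone m :=
          hΩ ▸ Set.mem_image_of_mem _ hmem
        rw [mem_iff] at hgmem
        have hrw : g *ᵥ (x + ε • e0) = ψ ε := by
          rw [hψdef]
          simp [mulVec_add, mulVec_smul]
        rw [hrw] at hgmem
        simp only [hφdef]
        linarith
      have hlim : Filter.Tendsto φ (nhdsWithin 0 (Set.Ioi 0)) (nhds (φ 0)) :=
        (hφc.tendsto 0).mono_left nhdsWithin_le_nhds
      have h0 : 0 ≤ φ 0 :=
        ge_of_tendsto hlim (Filter.eventually_of_mem self_mem_nhdsWithin hφpos)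
      have hψ0 : ψ 0 = g *ᵥ x := by
        rw [hψdef]
        simp
      simp only [hφdef, hψ0] at h0
      linarith
    -- the null cone is preserved
    have hnull : ∀ x : Fin m → ℝ, Q x = 0 → Q (g *ᵥ x) = 0 := by
      have main : ∀ x : Fin m → ℝ, Q x = 0 → 0 ≤ x 0 → Q (g *ᵥ x) = 0 := by
        intro x hx hx0
        have hSx : S x = x 0 := by
          rw [Q_eq] at hx
          have hsq : S x ^ 2 = x 0 ^ 2 := by linarith
          have h1 : S x = |x 0| := by
            rw [← Real.sqrt_sq_eq_abs, ← hsq, Real.sqrt_sq (S_nonneg x)]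
          rw [h1, abs_of_nonneg hx0]
        have h1 := claim1 x hSx
        by_contra hQ
        have hQge : 0 ≤ Q (g *ᵥ x) := by
          rw [Q_eq]
          nlinarith [S_nonneg (g *ᵥ x)]
        have hQpos : 0 < Q (g *ᵥ x) := lt_of_le_of_ne hQge (Ne.symm hQ)
        have hgx0 : 0 < (g *ᵥ x) 0 := by
          rw [Q_eq] at hQpos
          nlinarith [S_nonneg (g *ᵥ x)]
        have hgxmem : g *ᵥ x ∈ futureCone m := (mem_iff' _).mpr ⟨hgx0, hQpos⟩
        rw [← hΩ] at hgxmem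
        obtain ⟨y, hy, hyx⟩ := hgxmem
        have : y = x := hinj hyx
        subst this
        rw [mem_iff] at hy
        linarith [hSx ▸ hy]
      intro x hx
      rcases le_or_gt 0 (x 0) with h | h
      · exact main x hx h
      · have hneg := main (-x) (by rw [Q_neg]; exact hx)
          (by simp only [Pi.neg_apply]; linarith)
        rwa [mulVec_neg, Q_neg] at hneg
    -- hence gᵀ η g is a multiple of η
    set M : Matrix (Fin m) (Fin m) ℝ := gᵀ * lorentzEta m * g with hMdef
    have hMsym : Mᵀ = M := by
      rw [hMdef, transpose_mul, transpose_mul, transpose_transpose, eta_sym, Matrix.mul_assoc]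
    have hMnull : ∀ x : Fin m → ℝ, Q x = 0 → x ⬝ᵥ (M *ᵥ x) = 0 := by
      intro x hx
      rw [hMdef, q_conj]
      exact hnull x hx
    have hM := eq_smul_eta M hMsym hMnull
    set c : ℝ := M 0 0 with hcdef
    have hcQ : c = Q (g *ᵥ (Pi.single 0 1 : Fin m → ℝ)) := by
      rw [← q_conj, ← hMdef, q_single]
      ring
    have hc : 0 < c := by
      rw [hcQ]
      exact ((mem_iff' _).mp hge0).2
    set t : ℝ := Real.sqrt c with htdef
    have ht : 0 < t := Real.sqrt_pos.mpr hc
    have ht2 : t * t = c := Real.mul_self_sqrt hc.le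
    refine ⟨t, ht, t⁻¹ • g, ?_, ?_, ?_, ?_⟩
    · rw [Matrix.isUnit_iff_isUnit_det, det_smul, Fintype.card_fin]
      exact ((isUnit_iff_ne_zero.mpr (inv_ne_zero ht.ne')).pow m).mul
        ((Matrix.isUnit_iff_isUnit_det g).mp hg)
    · rw [transpose_smul, Matrix.smul_mul, Matrix.smul_mul, Matrix.mul_smul, ← hMdef, hM,
        smul_smul, smul_smul]
      rw [show t⁻¹ * t⁻¹ * c = 1 by field_simp; linarith [ht2], one_smul]
    · rw [Matrix.smul_apply, smul_eq_mul]
      have hg00 : g 0 0 = (g *ᵥ (Pi.single 0 1 : Fin m → ℝ)) 0 := by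
        rw [mulVec_single]
        simp
      have := ((mem_iff' _).mp hge0).1
      rw [← hg00] at this
      exact mul_pos (inv_pos.mpr ht) this
    · rw [smul_smul, mul_inv_cancel₀ ht.ne', one_smul]
  · -- backward direction
    rintro ⟨t, ht, L, hL, hLor, hL00, rfl⟩
    have h3 : L * lorentzEta m * Lᵀ = lorentzEta m := lorentz_transpose L hLor
    set L' : Matrix (Fin m) (Fin m) ℝ := lorentzEta m * Lᵀ * lorentzEta m with hL'def
    have hLL' : L * L' = 1 := lorentz_inv_right L hLor
    have hL'T : L'ᵀ = lorentzEta m * (L * lorentzEta m) := by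
      rw [hL'def, transpose_mul, transpose_mul, transpose_transpose, eta_sym]
    have hL'lor : L'ᵀ * lorentzEta m * L' = lorentzEta m := by
      have hstep : L'ᵀ * lorentzEta m * L'
          = lorentzEta m * (L * lorentzEta m * Lᵀ) * lorentzEta m := by
        rw [hL'T, hL'def]
        simp only [Matrix.mul_assoc, eta_mul_eta_mul]
      rw [hstep, h3, eta_mul_eta, one_mul]
    have hL'3 : L' * lorentzEta m * L'ᵀ = lorentzEta m := lorentz_transpose L' hL'lor
    have hL'00 : 0 < L' 0 0 := by
      have hentry : L' 0 0 = L 0 0 := by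
        rw [hL'def, lorentzEta, mul_diagonal, diagonal_mul]
        simp
      rw [hentry]
      exact hL00
    -- main image equality
    apply Set.Subset.antisymm
    · rintro _ ⟨x, hx, rfl⟩
      rw [smul_mulVec]
      exact (smul_mem_iff ht _).mpr (lorentz_maps_cone L hLor h3 hL00 hx)
    · intro y hy
      refine ⟨t⁻¹ • (L' *ᵥ y), ?_, ?_⟩
      · exact (smul_mem_iff (inv_pos.mpr ht) _).mpr
          (lorentz_maps_cone L' hL'lor hL'3 hL'00 hy)
      · rw [smul_mulVec, mulVec_smul, smul_smul, mul_inv_cancel₀ ht.ne', one_smul,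
          mulVec_mulVec, hLL', one_mulVec]
end

section
/- Let m ≥ 1 and let D̄ = {z ∈ ℂ^m : (z|z) + √((z|z)² − |⟨z,z⟩|²) ≤ 1} be the closed Lie ball. Then the set of extreme points of the convex set D̄ equals the Shilov boundary S₀ = {z ∈ ℂ^m : (z|z) = 1 and |⟨z,z⟩| = 1}. -/
set_option maxHeartbeats 1000000


/-- The closed Lie ball in `ℂᵐ`:
`{z : (z|z) + √((z|z)² − |⟨z,z⟩|²) ≤ 1}`, where `(z|w)` is the standard Hermitian inner
product and `⟨z,w⟩` the standard symmetric bilinear form. -/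
def closedLieBall (m : ℕ) : Set (Fin m → ℂ) :=
  {z | (∑ k, Complex.normSq (z k)) +
      Real.sqrt ((∑ k, Complex.normSq (z k)) ^ 2 - ‖∑ k, z k ^ 2‖ ^ 2) ≤ 1}

/-- The Shilov boundary of the Lie ball: `{z : (z|z) = 1 and |⟨z,z⟩| = 1}`. -/
def lieBallShilov (m : ℕ) : Set (Fin m → ℂ) :=
  {z | (∑ k, Complex.normSq (z k)) = 1 ∧ ‖∑ k, z k ^ 2‖ = 1}

/- ### Auxiliary definitions and lemmas -/

noncomputable def lieQ {m : ℕ} (z : Fin m → ℂ) : ℝ := ∑ k, Complex.normSq (z k)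

noncomputable def lieP {m : ℕ} (z : Fin m → ℂ) : ℝ := ‖∑ k, z k ^ 2‖

noncomputable def lieN {m : ℕ} (z : Fin m → ℂ) : ℝ :=
  lieQ z + Real.sqrt (lieQ z ^ 2 - lieP z ^ 2)

lemma lieN_def {m : ℕ} (z : Fin m → ℂ) :
    lieN z = lieQ z + Real.sqrt (lieQ z ^ 2 - lieP z ^ 2) := rfl

lemma mem_closedLieBall_iff {m : ℕ} (z : Fin m → ℂ) :
    z ∈ closedLieBall m ↔ lieN z ≤ 1 := Iff.rfl

lemma lieQ_nonneg {m : ℕ} (z : Fin m → ℂ) : 0 ≤ lieQ z :=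
  Finset.sum_nonneg fun _ _ => Complex.normSq_nonneg _

lemma lieP_nonneg {m : ℕ} (z : Fin m → ℂ) : 0 ≤ lieP z := norm_nonneg _

lemma lieP_le_lieQ {m : ℕ} (z : Fin m → ℂ) : lieP z ≤ lieQ z := by
  unfold lieP lieQ
  calc ‖∑ k, z k ^ 2‖ ≤ ∑ k, ‖z k ^ 2‖ :=
        norm_sum_le _ _
    _ = ∑ k, Complex.normSq (z k) := by
        refine Finset.sum_congr rfl fun k _ => ?_
        rw [norm_pow, Complex.sq_norm]

lemma lieQ_le_one {m : ℕ} {z : Fin m → ℂ} (h : z ∈ closedLieBall m) : lieQ z ≤ 1 :=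
  le_trans (le_add_of_nonneg_right (Real.sqrt_nonneg _)) h

lemma lieQ_smul {m : ℕ} (μ : ℂ) (z : Fin m → ℂ) :
    lieQ (μ • z) = ‖μ‖ ^ 2 * lieQ z := by
  unfold lieQ
  rw [Finset.mul_sum]
  refine Finset.sum_congr rfl fun k _ => ?_
  simp [Pi.smul_apply, smul_eq_mul, Complex.normSq_mul, Complex.sq_norm]

lemma lieP_smul {m : ℕ} (μ : ℂ) (z : Fin m → ℂ) :
    lieP (μ • z) = ‖μ‖ ^ 2 * lieP z := by
  unfold lieP
  have : ∑ k, (μ • z) k ^ 2 = μ ^ 2 * ∑ k, z k ^ 2 := by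
    rw [Finset.mul_sum]
    refine Finset.sum_congr rfl fun k _ => ?_
    simp [Pi.smul_apply, smul_eq_mul, mul_pow]
  rw [this, norm_mul, norm_pow]

lemma lieN_smul {m : ℕ} (μ : ℂ) (z : Fin m → ℂ) :
    lieN (μ • z) = ‖μ‖ ^ 2 * lieN z := by
  have ha : (0:ℝ) ≤ ‖μ‖ ^ 2 := sq_nonneg _
  rw [lieN_def, lieN_def, lieQ_smul, lieP_smul]
  rw [show (‖μ‖ ^ 2 * lieQ z) ^ 2 - (‖μ‖ ^ 2 * lieP z) ^ 2
      = (‖μ‖ ^ 2) ^ 2 * (lieQ z ^ 2 - lieP z ^ 2) by ring]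
  rw [Real.sqrt_mul (sq_nonneg _), Real.sqrt_sq ha]
  ring

lemma lieN_smul_real {m : ℕ} (c : ℝ) (z : Fin m → ℂ) :
    lieN (c • z) = c ^ 2 * lieN z := by
  have h : c • z = (c : ℂ) • z := by
    funext k
    simp [Pi.smul_apply, Complex.real_smul]
  rw [h, lieN_smul, Complex.norm_real, Real.norm_eq_abs, sq_abs]

/-- Value of `lieN` on vectors with orthogonal scaled real and imaginary parts. -/
lemma lieN_coeffs {m : ℕ} (A B : Fin m → ℝ) (hAB : ∑ k, A k * B k = 0)
    (σ τ : ℝ) (hσ : 0 ≤ σ) (hτ : 0 ≤ τ) :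
    lieN (fun k => ((σ * A k : ℝ) : ℂ) + ((τ * B k : ℝ) : ℂ) * Complex.I)
      = (σ * Real.sqrt (∑ k, A k ^ 2) + τ * Real.sqrt (∑ k, B k ^ 2)) ^ 2 := by
  set g : Fin m → ℂ := fun k => ((σ * A k : ℝ) : ℂ) + ((τ * B k : ℝ) : ℂ) * Complex.I with hg
  set S2 : ℝ := ∑ k, A k ^ 2 with hS2
  set T2 : ℝ := ∑ k, B k ^ 2 with hT2
  have hS2n : 0 ≤ S2 := Finset.sum_nonneg fun _ _ => sq_nonneg _
  have hT2n : 0 ≤ T2 := Finset.sum_nonneg fun _ _ => sq_nonneg _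
  have hgre : ∀ k, (g k).re = σ * A k := by intro k; simp [hg]
  have hgim : ∀ k, (g k).im = τ * B k := by intro k; simp [hg]
  have hQ : lieQ g = σ ^ 2 * S2 + τ ^ 2 * T2 := by
    unfold lieQ
    have : ∀ k ∈ Finset.univ, Complex.normSq (g k)
        = σ ^ 2 * A k ^ 2 + τ ^ 2 * B k ^ 2 := by
      intro k _
      rw [Complex.normSq_apply, hgre, hgim]; ring
    rw [Finset.sum_congr rfl this, Finset.sum_add_distrib, ← Finset.mul_sum, ← Finset.mul_sum]
  have hsum2 : ∑ k, g k ^ 2 = ((σ ^ 2 * S2 - τ ^ 2 * T2 : ℝ) : ℂ) := by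
    apply Complex.ext
    · rw [Complex.re_sum, Complex.ofReal_re]
      have : ∀ k ∈ Finset.univ, (g k ^ 2).re = σ ^ 2 * A k ^ 2 - τ ^ 2 * B k ^ 2 := by
        intro k _
        rw [sq, Complex.mul_re, hgre, hgim]; ring
      rw [Finset.sum_congr rfl this, Finset.sum_sub_distrib, ← Finset.mul_sum, ← Finset.mul_sum]
    · rw [Complex.im_sum, Complex.ofReal_im]
      have : ∀ k ∈ Finset.univ, (g k ^ 2).im = 2 * σ * τ * (A k * B k) := by
        intro k _
        rw [sq, Complex.mul_im, hgre, hgim]; ring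
      rw [Finset.sum_congr rfl this, ← Finset.mul_sum, hAB, mul_zero]
  have hP : lieP g = |σ ^ 2 * S2 - τ ^ 2 * T2| := by
    unfold lieP
    rw [hsum2, Complex.norm_real, Real.norm_eq_abs]
  have hs2 : Real.sqrt S2 ^ 2 = S2 := Real.sq_sqrt hS2n
  have ht2 : Real.sqrt T2 ^ 2 = T2 := Real.sq_sqrt hT2n
  have hkey : lieQ g ^ 2 - lieP g ^ 2
      = (2 * σ * τ * Real.sqrt S2 * Real.sqrt T2) ^ 2 := by
    rw [hQ, hP, sq_abs]
    linear_combination (-(4 * σ ^ 2 * τ ^ 2 * T2)) * hs2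
      + (-(4 * σ ^ 2 * τ ^ 2 * Real.sqrt S2 ^ 2)) * ht2
  rw [lieN_def, hkey, Real.sqrt_sq (by positivity), hQ]
  linear_combination (-(σ ^ 2)) * hs2 + (-(τ ^ 2)) * ht2

lemma exp_neg_arg_mul (c : ℂ) :
    Complex.exp (-(c.arg : ℂ) * Complex.I) * c = (‖c‖ : ℂ) := by
  nth_rewrite 2 [← Complex.norm_mul_exp_arg_mul_I c]
  rw [mul_comm, mul_assoc, ← Complex.exp_add,
    show (c.arg : ℂ) * Complex.I + -(c.arg : ℂ) * Complex.I = 0 by ring,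
    Complex.exp_zero, mul_one]

lemma norm_lieQ {m : ℕ} (z : Fin m → ℂ) :
    ‖(WithLp.linearEquiv 2 ℝ (Fin m → ℂ)).symm z‖ = Real.sqrt (lieQ z) := by
  rw [EuclideanSpace.norm_eq]
  congr 1
  refine Finset.sum_congr rfl fun k _ => ?_
  rw [WithLp.linearEquiv_symm_apply]
  exact Complex.sq_norm (z k)

/-- The set of extreme points of the closed Lie ball equals its Shilov boundary. -/
theorem extremePoints_closedLieBall {m : ℕ} (hm : 1 ≤ m) :
    Set.extremePoints ℝ (closedLieBall m) = lieBallShilov m := by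
  ext z
  constructor
  · -- extreme point → Shilov boundary
    rintro ⟨hzball, hext⟩
    have hN : lieN z ≤ 1 := hzball
    have hq0 : 0 ≤ lieQ z := lieQ_nonneg z
    have hp0 : 0 ≤ lieP z := lieP_nonneg z
    have hpq : lieP z ≤ lieQ z := lieP_le_lieQ z
    -- z ≠ 0
    have hz0 : z ≠ 0 := by
      rintro rfl
      set i : Fin m := ⟨0, hm⟩ with hi
      set e : Fin m → ℂ := fun k => if k = i then 1 else 0 with he
      have hQe : lieQ e = 1 := by
        simp [lieQ, he, apply_ite Complex.normSq]
      have hPe : lieP e = 1 := by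
        simp [lieP, he, apply_ite (fun x : ℂ => x ^ 2)]
      have hNe : lieN e ≤ 1 := by
        rw [lieN_def, hQe, hPe]
        norm_num
      have hNe' : lieN (-e) ≤ 1 := by
        rw [show -e = (-1 : ℝ) • e by simp, lieN_smul_real]
        norm_num
        linarith [hNe]
      have h0seg : (0 : Fin m → ℂ) ∈ openSegment ℝ e (-e) := by
        refine ⟨1/2, 1/2, by norm_num, by norm_num, by norm_num, ?_⟩
        rw [smul_neg, add_neg_cancel]
      have h1 := hext hNe hNe' h0seg
      have : e i = 0 := by rw [h1]; rfl
      simp [he] at this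
    have hqpos : 0 < lieQ z := by
      rcases lt_or_eq_of_le hq0 with h | h
      · exact h
      · exfalso
        apply hz0
        funext k
        have := (Finset.sum_eq_zero_iff_of_nonneg
          (fun k _ => Complex.normSq_nonneg (z k))).mp h.symm k (Finset.mem_univ k)
        exact Complex.normSq_eq_zero.mp this
    have hNpos : 0 < lieN z :=
      lt_of_lt_of_le hqpos (le_add_of_nonneg_right (Real.sqrt_nonneg _))
    by_cases hlt : lieN z < 1
    · -- interior: not extreme, contradiction
      exfalso
      set c := lieN z with hc
      set ε : ℝ := (1 - c) / 2 with hε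
      have hεpos : 0 < ε := by rw [hε]; linarith
      have ha : lieN ((1 + ε) • z) ≤ 1 := by
        rw [lieN_smul_real, ← hc]
        rw [hε]
        nlinarith [mul_nonneg (sq_nonneg (1 - c)) (by linarith : (0:ℝ) ≤ 4 - c), hNpos]
      have hb : lieN ((1 - ε) • z) ≤ 1 := by
        rw [lieN_smul_real, ← hc]
        nlinarith [hNpos, hεpos, hε]
      have hseg : z ∈ openSegment ℝ ((1 + ε) • z) ((1 - ε) • z) := by
        refine ⟨1/2, 1/2, by norm_num, by norm_num, by norm_num, ?_⟩
        rw [smul_smul, smul_smul, ← add_smul,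
          show (1/2 : ℝ) * (1 + ε) + (1/2) * (1 - ε) = 1 by ring, one_smul]
      have h1 := hext ha hb hseg
      have h2 : ε • z = 0 := by
        have := sub_eq_zero_of_eq h1
        rwa [add_smul, one_smul, add_comm, add_sub_cancel_right] at this
      rcases smul_eq_zero.mp h2 with h | h
      · exact hεpos.ne' h
      · exact hz0 h
    · have heq : lieN z = 1 := le_antisymm hN (not_lt.mp hlt)
      by_cases hpq2 : lieP z = lieQ z
      · -- Shilov boundary point
        have hs0 : Real.sqrt (lieQ z ^ 2 - lieP z ^ 2) = 0 := by
          rw [hpq2, sub_self, Real.sqrt_zero]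
        have hq1 : lieQ z = 1 := by
          rw [lieN_def, hs0, add_zero] at heq
          exact heq
        exact ⟨hq1, hpq2.trans hq1⟩
      · -- p < q : perturbation, contradiction
        exfalso
        have hplt : lieP z < lieQ z := lt_of_le_of_ne hpq hpq2
        set cz : ℂ := ∑ k, z k ^ 2 with hcz
        set lam : ℂ := Complex.exp (-(cz.arg : ℂ) * Complex.I / 2) with hlam
        have hlam2 : lam ^ 2 = Complex.exp (-(cz.arg : ℂ) * Complex.I) := by
          rw [hlam, ← Complex.exp_nat_mul]
          congr 1
          push_cast
          ring
        have habs_lam : ‖lam‖ = 1 := by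
          rw [hlam, Complex.norm_exp]
          norm_num [Complex.div_re, Complex.normSq_ofNat]
        have hlamcz : lam ^ 2 * cz = (‖cz‖ : ℂ) := by
          rw [hlam2]; exact exp_neg_arg_mul cz
        set w : Fin m → ℂ := lam • z with hw
        have hw2 : ∑ k, w k ^ 2 = ((lieP z : ℝ) : ℂ) := by
          have h1 : ∑ k, w k ^ 2 = lam ^ 2 * cz := by
            rw [hcz, Finset.mul_sum]
            refine Finset.sum_congr rfl fun k _ => ?_
            simp [hw, Pi.smul_apply, smul_eq_mul, mul_pow]
          rw [h1, hlamcz]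
          rfl
        set A : Fin m → ℝ := fun k => (w k).re with hA
        set B : Fin m → ℝ := fun k => (w k).im with hB
        set S2 : ℝ := ∑ k, A k ^ 2 with hS2
        set T2 : ℝ := ∑ k, B k ^ 2 with hT2
        have hAB : ∑ k, A k * B k = 0 := by
          have h1 := congrArg Complex.im hw2
          rw [Complex.im_sum, Complex.ofReal_im] at h1
          have h2 : ∀ k ∈ Finset.univ, (w k ^ 2).im = 2 * (A k * B k) := by
            intro k _
            rw [sq, Complex.mul_im, hA, hB]; ring
          rw [Finset.sum_congr rfl h2, ← Finset.mul_sum] at h1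
          linarith [h1]
        have hST : S2 - T2 = lieP z := by
          have h1 := congrArg Complex.re hw2
          rw [Complex.re_sum, Complex.ofReal_re] at h1
          have h2 : ∀ k ∈ Finset.univ, (w k ^ 2).re = A k ^ 2 - B k ^ 2 := by
            intro k _
            rw [sq, Complex.mul_re, hA, hB]; ring
          rw [Finset.sum_congr rfl h2, Finset.sum_sub_distrib] at h1
          exact h1
        have hQw : S2 + T2 = lieQ z := by
          have h1 : lieQ w = lieQ z := by
            rw [hw, lieQ_smul, habs_lam]; ring
          rw [← h1]
          unfold lieQ
          rw [← Finset.sum_add_distrib]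
          refine Finset.sum_congr rfl fun k _ => ?_
          rw [Complex.normSq_apply, hA, hB]; ring
        have hT2pos : 0 < T2 := by linarith
        have hS2pos : 0 < S2 := by linarith
        set s : ℝ := Real.sqrt S2 with hs
        set t : ℝ := Real.sqrt T2 with ht
        have hspos : 0 < s := Real.sqrt_pos.mpr hS2pos
        have htpos : 0 < t := Real.sqrt_pos.mpr hT2pos
        have hs2 : s ^ 2 = S2 := Real.sq_sqrt hS2pos.le
        have ht2 : t ^ 2 = T2 := Real.sq_sqrt hT2pos.le
        have hts : t ≤ s := by
          rw [hs, ht]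
          exact Real.sqrt_le_sqrt (by linarith)
        have hsqrt : Real.sqrt (lieQ z ^ 2 - lieP z ^ 2) = 2 * s * t := by
          have h1 : lieQ z ^ 2 - lieP z ^ 2 = (2 * s * t) ^ 2 := by
            rw [← hQw, ← hST]
            linear_combination (-(4 * T2)) * hs2 + (-(4 * s ^ 2)) * ht2
          rw [h1, Real.sqrt_sq (by positivity)]
        have hst1 : s + t = 1 := by
          have h1 : (s + t) ^ 2 = 1 := by
            rw [lieN_def, hsqrt] at heq
            linear_combination heq + hQw + hs2 + ht2
          rw [← Real.sqrt_sq (by positivity : (0:ℝ) ≤ s + t), h1, Real.sqrt_one]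
        -- perturbation coefficients
        set σp : ℝ := (s + t/2) / s with hσp
        set σm : ℝ := (s - t/2) / s with hσm
        have hσpn : 0 ≤ σp := by positivity
        have hσmn : 0 ≤ σm := div_nonneg (by linarith) hspos.le
        set gp : Fin m → ℂ := fun k => ((σp * A k : ℝ) : ℂ) + (((1/2 : ℝ) * B k : ℝ) : ℂ) * Complex.I with hgp
        set gm : Fin m → ℂ := fun k => ((σm * A k : ℝ) : ℂ) + (((3/2 : ℝ) * B k : ℝ) : ℂ) * Complex.I with hgm
        have hNgp : lieN gp ≤ 1 := by
          rw [hgp, lieN_coeffs A B hAB σp (1/2) hσpn (by norm_num), ← hS2, ← hT2, ← hs, ← ht]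
          have h1 : σp * s = s + t/2 := by rw [hσp]; field_simp
          have h2 : σp * s + 1/2 * t = 1 := by linarith
          rw [h2]
          norm_num
        have hNgm : lieN gm ≤ 1 := by
          rw [hgm, lieN_coeffs A B hAB σm (3/2) hσmn (by norm_num), ← hS2, ← hT2, ← hs, ← ht]
          have h1 : σm * s = s - t/2 := by rw [hσm]; field_simp
          have h2 : σm * s + 3/2 * t = 1 := by linarith
          rw [h2]
          norm_num
        set lc : ℂ := (starRingEnd ℂ) lam with hlc
        have hlclam : lc * lam = 1 := by
          rw [hlc, mul_comm, Complex.mul_conj]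
          rw [Complex.normSq_eq_norm_sq, habs_lam]
          norm_num
        have hlc0 : lc ≠ 0 := by
          intro h
          rw [h, zero_mul] at hlclam
          exact one_ne_zero hlclam.symm
        set a : Fin m → ℂ := lc • gp with ha
        set b : Fin m → ℂ := lc • gm with hb
        have habslc : ‖lc‖ = 1 := by
          rw [hlc, Complex.norm_conj, habs_lam]
        have hamem : lieN a ≤ 1 := by
          rw [ha, lieN_smul, habslc]
          norm_num
          linarith [hNgp]
        have hbmem : lieN b ≤ 1 := by
          rw [hb, lieN_smul, habslc]
          norm_num
          linarith [hNgm]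
        have hAk : ∀ k, A k = (w k).re := fun _ => rfl
        have hBk : ∀ k, B k = (w k).im := fun _ => rfl
        have hσsum : σp + σm = 2 := by rw [hσp, hσm]; field_simp; ring
        have hgsum : gp + gm = (2 : ℂ) • w := by
          funext k
          show gp k + gm k = 2 * w k
          rw [hgp, hgm]
          apply Complex.ext
          · simp only [Complex.add_re, Complex.mul_re, Complex.ofReal_re, Complex.ofReal_im,
              Complex.I_re, Complex.I_im, Complex.re_ofNat, Complex.im_ofNat,
              mul_zero, zero_mul, mul_one, sub_zero, zero_sub, add_zero]
            linear_combination (A k) * hσsum + 2 * (hAk k)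
          · simp only [Complex.add_im, Complex.mul_im, Complex.ofReal_re, Complex.ofReal_im,
              Complex.I_re, Complex.I_im, Complex.re_ofNat, Complex.im_ofNat,
              mul_zero, zero_mul, mul_one, sub_zero, zero_sub, add_zero, zero_add]
            linear_combination 2 * (hBk k)
        have hzab : (1/2 : ℝ) • a + (1/2 : ℝ) • b = z := by
          have h4 : a + b = (2:ℂ) • z := by
            rw [ha, hb, ← smul_add, hgsum, smul_comm lc ((2:ℂ)) w, hw,
              smul_smul lc lam z, hlclam, one_smul]
          have h5 : (1/2 : ℝ) • a + (1/2 : ℝ) • b = (1/2 : ℝ) • (a + b) :=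
            (smul_add _ _ _).symm
          rw [h5, h4]
          funext k
          show (1/2 : ℝ) • ((2:ℂ) * z k) = z k
          rw [Complex.real_smul]
          push_cast
          ring
        have hseg : z ∈ openSegment ℝ a b :=
          ⟨1/2, 1/2, by norm_num, by norm_num, by norm_num, hzab⟩
        have h1 := hext hamem hbmem hseg
        have h2 := hext hbmem hamem (by rw [openSegment_symm]; exact hseg)
        have hab : a = b := h1.trans h2.symm
        have hgpm : gp = gm := by
          have := hab
          rw [ha, hb] at this
          exact smul_right_injective (Fin m → ℂ) hlc0 this
        have hσne : σp - σm ≠ 0 := by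
          have : σp - σm = t / s := by rw [hσp, hσm]; field_simp; ring
          rw [this]
          positivity
        have hA0 : ∀ k, A k = 0 := by
          intro k
          have h3 := congrArg Complex.re (congrFun hgpm k)
          rw [hgp, hgm] at h3
          simp only [Complex.add_re, Complex.ofReal_re, Complex.mul_re, Complex.ofReal_im,
            Complex.I_re, Complex.I_im, mul_zero, zero_mul, mul_one, sub_zero, zero_sub,
            add_zero] at h3
          by_contra hk
          apply hσne
          have h4 : (σp - σm) * A k = 0 := by linear_combination h3
          rcases mul_eq_zero.mp h4 with h | h
          · exact h
          · exact absurd h hk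
        have : S2 = 0 := by
          rw [hS2]
          exact Finset.sum_eq_zero fun k _ => by rw [hA0 k]; ring
        linarith
  · -- Shilov boundary → extreme point
    intro hz
    have hq1 : lieQ z = 1 := hz.1
    have hp1 : lieP z = 1 := hz.2
    refine ⟨?_, ?_⟩
    · show lieN z ≤ 1
      rw [lieN_def, hq1, hp1]
      norm_num
    · intro x1 hx1 x2 hx2 hseg
      obtain ⟨θ, s, hθ, hs, hθs, hsum⟩ := hseg
      by_cases hx : x1 = x2
      · subst hx
        have h1 : x1 = z := by
          rw [← hsum, ← add_smul, hθs, one_smul]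
        exact h1
      · exfalso
        set φ := (WithLp.linearEquiv 2 ℝ (Fin m → ℂ)).symm with hφ
        have hn1 : ‖φ x1‖ ≤ 1 := by
          rw [hφ, norm_lieQ]
          exact Real.sqrt_le_one.mpr (lieQ_le_one hx1)
        have hn2 : ‖φ x2‖ ≤ 1 := by
          rw [hφ, norm_lieQ]
          exact Real.sqrt_le_one.mpr (lieQ_le_one hx2)
        have hnz : ‖φ z‖ = 1 := by
          rw [hφ, norm_lieQ, hq1, Real.sqrt_one]
        have hne : φ x1 ≠ φ x2 := fun h => hx (φ.injective h)
        have hlt : ‖θ • φ x1 + s • φ x2‖ < 1 :=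
          norm_combo_lt_of_ne hn1 hn2 hne hθ hs hθs
        have heqφ : θ • φ x1 + s • φ x2 = φ z := by
          rw [← hsum, map_add, map_smul, map_smul]
        rw [heqφ, hnz] at hlt
        exact lt_irrefl 1 hlt
end

section
/- Let r ≥ 1. Set H = {z ∈ ℂ^{r×r} : (z + zᴴ)/2 is positive definite} and D = {z ∈ ℂ^{r×r} : 1 − zᴴ z is positive definite}, where zᴴ denotes the conjugate transpose. Then: for every z ∈ H the matrix z + 1 is invertible and γ(z) := (z − 1)(z + 1)^{−1} lies in D; for every w ∈ D the matrix 1 − w is invertible and (1 + w)(1 − w)^{−1} lies in H; and the two maps so defined are mutually inverse bijections between H and D. (Thus the Cayley transformation γ maps the tube domain over the cone of positive definite Hermitian matrices biholomorphically onto the matrix unit ball.) -/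
open Matrix
open scoped ComplexOrder

/-- The matrix upper half space: `r × r` complex matrices whose Hermitian part `(z + zᴴ)/2`
is positive definite (the tube domain over the cone of positive definite Hermitian matrices). -/
def matrixHalfSpace (r : ℕ) : Set (Matrix (Fin r) (Fin r) ℂ) :=
  {z | (((2 : ℂ)⁻¹) • (z + zᴴ)).PosDef}

/-- The matrix unit ball: `r × r` complex matrices `w` with `1 − wᴴ w` positive definite. -/
def matrixBall (r : ℕ) : Set (Matrix (Fin r) (Fin r) ℂ) :=
  {w | ((1 : Matrix (Fin r) (Fin r) ℂ) - wᴴ * w).PosDef}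


section aux
variable {n : Type*} [Fintype n] [DecidableEq n]

lemma myPosDef_conj {M B : Matrix n n ℂ} (hM : M.PosDef) (hB : IsUnit B) :
    (Bᴴ * M * B).PosDef := by
  refine posDef_iff_dotProduct_mulVec.2 ⟨isHermitian_conjTranspose_mul_mul B hM.1, fun x hx => ?_⟩
  have hinj : Function.Injective B.mulVec := Matrix.mulVec_injective_iff_isUnit.2 hB
  have hBx : B *ᵥ x ≠ 0 := fun h => hx (hinj (by simpa using h))
  have key : star x ⬝ᵥ ((Bᴴ * M * B) *ᵥ x) = star (B *ᵥ x) ⬝ᵥ (M *ᵥ (B *ᵥ x)) := by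
    rw [star_mulVec, ← Matrix.mulVec_mulVec, ← Matrix.mulVec_mulVec,
      Matrix.dotProduct_mulVec]
  rw [key]
  exact (posDef_iff_dotProduct_mulVec.1 hM).2 hBx

lemma myUnit_half {a : Matrix n n ℂ} (ha : (((2:ℂ)⁻¹) • (a + aᴴ)).PosDef) : IsUnit a := by
  rw [← Matrix.mulVec_injective_iff_isUnit]
  intro x y hxy
  by_contra hne
  set v : n → ℂ := x - y with hvdef
  have hv0 : v ≠ 0 := sub_ne_zero.2 fun h => hne (by simpa [h] using hxy)
  have hv : a *ᵥ v = 0 := by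
    rw [hvdef, Matrix.mulVec_sub, sub_eq_zero]; exact hxy
  have h := (posDef_iff_dotProduct_mulVec.1 ha).2 hv0
  have h2 : star v ⬝ᵥ ((((2:ℂ)⁻¹) • (a + aᴴ)) *ᵥ v) = 0 := by
    have hs : star v ⬝ᵥ (aᴴ *ᵥ v) = 0 := by
      rw [Matrix.dotProduct_mulVec, ← Matrix.star_mulVec, hv]
      simp
    rw [Matrix.smul_mulVec, Matrix.add_mulVec, hv, dotProduct_smul,
      dotProduct_add, hs]
    simp
  rw [h2] at h
  exact lt_irrefl _ h

lemma myUnit_ball {w : Matrix n n ℂ} (hw : ((1 : Matrix n n ℂ) - wᴴ * w).PosDef) :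
    IsUnit (1 - w) := by
  rw [← Matrix.mulVec_injective_iff_isUnit]
  intro x y hxy
  by_contra hne
  set v : n → ℂ := x - y with hvdef
  have hv0 : v ≠ 0 := sub_ne_zero.2 fun h => hne (by simpa [h] using hxy)
  have hv : (1 - w) *ᵥ v = 0 := by
    rw [hvdef, Matrix.mulVec_sub, sub_eq_zero]; exact hxy
  have hwv : w *ᵥ v = v := by
    have := hv
    rw [Matrix.sub_mulVec, Matrix.one_mulVec, sub_eq_zero] at this
    exact this.symm
  have h := (posDef_iff_dotProduct_mulVec.1 hw).2 hv0
  have h2 : star v ⬝ᵥ (((1 : Matrix n n ℂ) - wᴴ * w) *ᵥ v) = 0 := by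
    rw [Matrix.sub_mulVec, Matrix.one_mulVec, dotProduct_sub,
      ← Matrix.mulVec_mulVec, Matrix.dotProduct_mulVec, ← Matrix.star_mulVec, hwv]
    simp
  rw [h2] at h
  exact lt_irrefl _ h

end aux


/-- The Cayley transformation `γ(z) = (z − 1)(z + 1)⁻¹` maps the tube domain `H` over the cone
of positive definite Hermitian matrices bijectively onto the matrix unit ball `D`, with inverse
`w ↦ (1 + w)(1 − w)⁻¹`; in particular `z + 1` is invertible for `z ∈ H` and `1 − w` is
invertible for `w ∈ D`. -/
theorem cayley_transform_matrix {r : ℕ} (hr : 1 ≤ r) :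
    (∀ z ∈ matrixHalfSpace r, IsUnit (z + 1) ∧ (z - 1) * (z + 1)⁻¹ ∈ matrixBall r) ∧
    (∀ w ∈ matrixBall r, IsUnit (1 - w) ∧ (1 + w) * (1 - w)⁻¹ ∈ matrixHalfSpace r) ∧
    (∀ z ∈ matrixHalfSpace r, (1 + (z - 1) * (z + 1)⁻¹) * (1 - (z - 1) * (z + 1)⁻¹)⁻¹ = z) ∧
    (∀ w ∈ matrixBall r, ((1 + w) * (1 - w)⁻¹ - 1) * ((1 + w) * (1 - w)⁻¹ + 1)⁻¹ = w) := by
  -- a reusable fact: `z + 1` is a unit for `z` in the half space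
  have hunit : ∀ z ∈ matrixHalfSpace r, IsUnit (z + 1) := by
    intro z hz
    have hz' : (((2 : ℂ)⁻¹) • (z + zᴴ)).PosDef := hz
    apply myUnit_half (a := z + 1)
    have heq : ((2 : ℂ)⁻¹) • ((z + 1) + (z + 1)ᴴ)
        = ((2 : ℂ)⁻¹) • (z + zᴴ) + 1 := by
      rw [conjTranspose_add, conjTranspose_one]
      module
    rw [heq]
    exact hz'.add Matrix.PosDef.one
  refine ⟨?_, ?_, ?_, ?_⟩
  · -- z ↦ (z-1)(z+1)⁻¹ maps into the ball
    intro z hz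
    have hz' : (((2 : ℂ)⁻¹) • (z + zᴴ)).PosDef := hz
    have hu := hunit z hz
    have hdet : IsUnit (z + 1).det := (Matrix.isUnit_iff_isUnit_det _).1 hu
    have hu1 : (z + 1) * (z + 1)⁻¹ = 1 := Matrix.mul_nonsing_inv _ hdet
    have hu2 : (z + 1)⁻¹ * (z + 1) = 1 := Matrix.nonsing_inv_mul _ hdet
    have hui : IsUnit (z + 1)⁻¹ := (Matrix.isUnit_iff_isUnit_det _).2 (Matrix.isUnit_nonsing_inv_det _ hdet)
    refine ⟨hu, ?_⟩
    have hA : ((z + 1)⁻¹)ᴴ * (z + 1)ᴴ = 1 := by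
      rw [← conjTranspose_mul, hu1, conjTranspose_one]
    have hmid : (z + 1)ᴴ * (z + 1) - (z - 1)ᴴ * (z - 1) = (z + zᴴ) + (z + zᴴ) := by
      rw [conjTranspose_add, conjTranspose_sub, conjTranspose_one]
      noncomm_ring
    have key : (1 : Matrix (Fin r) (Fin r) ℂ) - ((z - 1) * (z + 1)⁻¹)ᴴ * ((z - 1) * (z + 1)⁻¹)
        = ((z + 1)⁻¹)ᴴ * ((z + zᴴ) + (z + zᴴ)) * (z + 1)⁻¹ := by
      calc (1 : Matrix (Fin r) (Fin r) ℂ) - ((z - 1) * (z + 1)⁻¹)ᴴ * ((z - 1) * (z + 1)⁻¹)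
          = (((z + 1)⁻¹)ᴴ * (z + 1)ᴴ) * ((z + 1) * (z + 1)⁻¹)
            - (((z + 1)⁻¹)ᴴ * (z - 1)ᴴ) * ((z - 1) * (z + 1)⁻¹) := by
            rw [hA, hu1, conjTranspose_mul]; simp
        _ = ((z + 1)⁻¹)ᴴ * ((z + 1)ᴴ * (z + 1) - (z - 1)ᴴ * (z - 1)) * (z + 1)⁻¹ := by
            noncomm_ring
        _ = ((z + 1)⁻¹)ᴴ * ((z + zᴴ) + (z + zᴴ)) * (z + 1)⁻¹ := by rw [hmid]
    have hNN : ((z + zᴴ) + (z + zᴴ)).PosDef := by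
      have h2 : z + zᴴ = ((2 : ℂ)⁻¹) • (z + zᴴ) + ((2 : ℂ)⁻¹) • (z + zᴴ) := by module
      rw [h2]
      exact (hz'.add hz').add (hz'.add hz')
    show ((1 : Matrix (Fin r) (Fin r) ℂ)
      - ((z - 1) * (z + 1)⁻¹)ᴴ * ((z - 1) * (z + 1)⁻¹)).PosDef
    rw [key]
    exact myPosDef_conj hNN hui
  · -- w ↦ (1+w)(1-w)⁻¹ maps into the half space
    intro w hw
    have hw' : ((1 : Matrix (Fin r) (Fin r) ℂ) - wᴴ * w).PosDef := hw
    have hv := myUnit_ball hw'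
    have hdet : IsUnit (1 - w).det := (Matrix.isUnit_iff_isUnit_det _).1 hv
    have hv1 : (1 - w) * (1 - w)⁻¹ = 1 := Matrix.mul_nonsing_inv _ hdet
    have hv2 : (1 - w)⁻¹ * (1 - w) = 1 := Matrix.nonsing_inv_mul _ hdet
    have hvi : IsUnit (1 - w)⁻¹ := (Matrix.isUnit_iff_isUnit_det _).2 (Matrix.isUnit_nonsing_inv_det _ hdet)
    refine ⟨hv, ?_⟩
    have hA : ((1 - w)⁻¹)ᴴ * (1 - w)ᴴ = 1 := by
      rw [← conjTranspose_mul, hv1, conjTranspose_one]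
    have hz1 : (1 + w) * (1 - w)⁻¹
        = ((1 - w)⁻¹)ᴴ * ((1 - w)ᴴ * (1 + w)) * (1 - w)⁻¹ := by
      rw [show (1 - w)⁻¹ᴴ * ((1 - w)ᴴ * (1 + w)) * (1 - w)⁻¹
          = ((1 - w)⁻¹ᴴ * (1 - w)ᴴ) * ((1 + w) * (1 - w)⁻¹) from by noncomm_ring,
        hA, one_mul]
    have hz2 : ((1 + w) * (1 - w)⁻¹)ᴴ
        = ((1 - w)⁻¹)ᴴ * ((1 + wᴴ) * (1 - w)) * (1 - w)⁻¹ := by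
      rw [conjTranspose_mul, conjTranspose_add, conjTranspose_one]
      rw [Matrix.mul_assoc, Matrix.mul_assoc, hv1, Matrix.mul_one]
    have hmid : (1 - w)ᴴ * (1 + w) + (1 + wᴴ) * (1 - w)
        = ((1 : Matrix (Fin r) (Fin r) ℂ) - wᴴ * w)
          + ((1 : Matrix (Fin r) (Fin r) ℂ) - wᴴ * w) := by
      rw [conjTranspose_sub, conjTranspose_one]
      noncomm_ring
    have key : ((2 : ℂ)⁻¹) • ((1 + w) * (1 - w)⁻¹ + ((1 + w) * (1 - w)⁻¹)ᴴ)
        = ((1 - w)⁻¹)ᴴ * ((1 : Matrix (Fin r) (Fin r) ℂ) - wᴴ * w) * (1 - w)⁻¹ := by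
      rw [hz2, hz1]
      rw [show ((1 - w)⁻¹)ᴴ * ((1 - w)ᴴ * (1 + w)) * (1 - w)⁻¹
            + ((1 - w)⁻¹)ᴴ * ((1 + wᴴ) * (1 - w)) * (1 - w)⁻¹
          = ((1 - w)⁻¹)ᴴ * ((1 - w)ᴴ * (1 + w) + (1 + wᴴ) * (1 - w)) * (1 - w)⁻¹ from by
        noncomm_ring]
      rw [hmid]
      rw [show ((1 - w)⁻¹)ᴴ * (((1 : Matrix (Fin r) (Fin r) ℂ) - wᴴ * w)
            + ((1 : Matrix (Fin r) (Fin r) ℂ) - wᴴ * w)) * (1 - w)⁻¹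
          = ((1 - w)⁻¹)ᴴ * ((1 : Matrix (Fin r) (Fin r) ℂ) - wᴴ * w) * (1 - w)⁻¹
            + ((1 - w)⁻¹)ᴴ * ((1 : Matrix (Fin r) (Fin r) ℂ) - wᴴ * w) * (1 - w)⁻¹ from by
        noncomm_ring]
      module
    show (((2 : ℂ)⁻¹) • ((1 + w) * (1 - w)⁻¹ + ((1 + w) * (1 - w)⁻¹)ᴴ)).PosDef
    rw [key]
    exact myPosDef_conj hw' hvi
  · -- left inverse identity
    intro z hz
    have hu := hunit z hz
    have hdet : IsUnit (z + 1).det := (Matrix.isUnit_iff_isUnit_det _).1 hu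
    have hu1 : (z + 1) * (z + 1)⁻¹ = 1 := Matrix.mul_nonsing_inv _ hdet
    have hu2 : (z + 1)⁻¹ * (z + 1) = 1 := Matrix.nonsing_inv_mul _ hdet
    have hsub : (1 : Matrix (Fin r) (Fin r) ℂ) - (z - 1) * (z + 1)⁻¹
        = (1 + 1) * (z + 1)⁻¹ := by
      nth_rw 1 [← hu1]
      noncomm_ring
    have hinv : ((1 : Matrix (Fin r) (Fin r) ℂ) - (z - 1) * (z + 1)⁻¹)⁻¹
        = ((2 : ℂ)⁻¹) • (z + 1) := by
      apply Matrix.inv_eq_right_inv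
      rw [hsub, mul_smul_comm, Matrix.mul_assoc, hu2, Matrix.mul_one]
      module
    rw [hinv, mul_smul_comm]
    rw [show (1 + (z - 1) * (z + 1)⁻¹) * (z + 1)
        = (z + 1) + (z - 1) * ((z + 1)⁻¹ * (z + 1)) from by noncomm_ring]
    rw [hu2, Matrix.mul_one]
    module
  · -- right inverse identity
    intro w hw
    have hw' : ((1 : Matrix (Fin r) (Fin r) ℂ) - wᴴ * w).PosDef := hw
    have hv := myUnit_ball hw'
    have hdet : IsUnit (1 - w).det := (Matrix.isUnit_iff_isUnit_det _).1 hv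
    have hv1 : (1 - w) * (1 - w)⁻¹ = 1 := Matrix.mul_nonsing_inv _ hdet
    have hv2 : (1 - w)⁻¹ * (1 - w) = 1 := Matrix.nonsing_inv_mul _ hdet
    have hadd : (1 + w) * (1 - w)⁻¹ + 1 = (1 + 1) * (1 - w)⁻¹ := by
      nth_rw 3 [← hv1]
      noncomm_ring
    have hinv : ((1 + w) * (1 - w)⁻¹ + 1)⁻¹ = ((2 : ℂ)⁻¹) • (1 - w) := by
      apply Matrix.inv_eq_right_inv
      rw [hadd, mul_smul_comm, Matrix.mul_assoc, hv2, Matrix.mul_one]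
      module
    rw [hinv, mul_smul_comm]
    rw [show ((1 + w) * (1 - w)⁻¹ - 1) * (1 - w)
        = (1 + w) * ((1 - w)⁻¹ * (1 - w)) - (1 - w) from by noncomm_ring]
    rw [hv2, Matrix.mul_one]
    module
end
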